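/- arXiv:1201.0533 — 6 statements merged into one kernel-verified Lean document; each statement's English description precedes it below -/
import Mathlib

section
/- Let {X_k, F_k}_{k≥0} be a discrete-time real-valued conditionally symmetric submartingale, and let η_k = X_k − E[X_k | F_{k−1}]. Assume that for some constants d, σ > 0, almost surely η_k ≥ −d and E[η_k² | F_{k−1}] ≤ σ² for every k ≥ 1. Set γ = σ²/d² and δ = α/d. Then for every α ≥ 0 with δ ∈ [0,1) and every n ≥ 1, P( min_{1≤k≤n} (X_k − X_0) ≤ −αn ) ≤ exp(−n E(γ,δ)). -/
open MeasureTheory ProbabilityTheory Filter Set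

/-- The exponent `E(γ, δ)` from the paper: `E(γ,δ) = δ x − ln(1 + γ(cosh x − 1))` where
`x = ln( (δ(1−γ) + √(δ²(1−γ)² + γ²(1−δ²))) / (γ(1−δ)) )`. -/
noncomputable def Eexp (γ δ : ℝ) : ℝ :=
  δ * Real.log ((δ * (1 - γ) + Real.sqrt (δ ^ 2 * (1 - γ) ^ 2 + γ ^ 2 * (1 - δ ^ 2)))
      / (γ * (1 - δ)))
    - Real.log (1 + γ *
        (Real.cosh (Real.log ((δ * (1 - γ)
            + Real.sqrt (δ ^ 2 * (1 - γ) ^ 2 + γ ^ 2 * (1 - δ ^ 2))) / (γ * (1 - δ)))) - 1))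


lemma aux_convex_sinh : ConvexOn ℝ (Set.Ici (0:ℝ)) Real.sinh := by
  have h2 : deriv^[2] Real.sinh = Real.sinh := by
    ext y
    simp [Function.iterate_succ, Real.deriv_sinh, Real.deriv_cosh]
  refine convexOn_of_deriv2_nonneg (convex_Ici 0) Real.continuous_sinh.continuousOn
    Real.differentiable_sinh.differentiableOn ?_ ?_
  · rw [Real.deriv_sinh]; exact Real.differentiable_cosh.differentiableOn
  · intro x hx
    rw [h2]
    rw [interior_Ici, Set.mem_Ioi] at hx
    exact Real.sinh_nonneg_iff.2 hx.le

lemma aux_sinh_mul_le {c x : ℝ} (hc0 : 0 ≤ c) (hc1 : c ≤ 1) (hx : 0 ≤ x) :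
    Real.sinh (c * x) ≤ c * Real.sinh x := by
  have h := aux_convex_sinh.2 (Set.mem_Ici.2 hx) (Set.mem_Ici.2 le_rfl)
    hc0 (by linarith : (0:ℝ) ≤ 1 - c) (by ring)
  simpa [smul_eq_mul] using h

lemma aux_cosh_le {y D : ℝ} (hD : 0 < D) (h : |y| ≤ D) :
    Real.cosh y ≤ 1 + y ^ 2 / D ^ 2 * (Real.cosh D - 1) := by
  have key : ∀ z : ℝ, 0 ≤ z → z ≤ D →
      Real.cosh z ≤ 1 + z ^ 2 / D ^ 2 * (Real.cosh D - 1) := by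
    intro z hz0 hzD
    have hid : ∀ w : ℝ, Real.cosh w = 1 + 2 * Real.sinh (w / 2) ^ 2 := by
      intro w
      have := Real.cosh_two_mul (w / 2)
      have h2 : 2 * (w / 2) = w := by ring
      rw [h2] at this
      rw [this, Real.cosh_sq]
      ring
    rw [hid z, hid D]
    have hsinh : Real.sinh (z / 2) ≤ z / D * Real.sinh (D / 2) := by
      have := aux_sinh_mul_le (c := z / D) (x := D / 2)
        (div_nonneg hz0 hD.le) ((div_le_one hD).2 hzD) (by linarith)
      have harg : z / D * (D / 2) = z / 2 := by field_simp
      rwa [harg] at this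
    have hs0 : 0 ≤ Real.sinh (z / 2) := Real.sinh_nonneg_iff.2 (by linarith)
    have hsq : Real.sinh (z / 2) ^ 2 ≤ (z / D) ^ 2 * Real.sinh (D / 2) ^ 2 := by
      nlinarith [hsinh, hs0]
    have : z ^ 2 / D ^ 2 = (z / D) ^ 2 := by rw [div_pow]
    rw [this]
    nlinarith [hsq]
  have := key |y| (abs_nonneg y) h
  rwa [Real.cosh_abs, sq_abs] at this

lemma aux_cosh_le' {t η d : ℝ} (ht : 0 ≤ t) (hd : 0 < d) (h : |η| ≤ d) :
    Real.cosh (t * η) ≤ 1 + η ^ 2 / d ^ 2 * (Real.cosh (t * d) - 1) := by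
  rcases eq_or_lt_of_le ht with rfl | ht'
  · simp
  · have hD : 0 < t * d := mul_pos ht' hd
    have habs : |t * η| ≤ t * d := by
      rw [abs_mul, abs_of_pos ht']
      exact mul_le_mul_of_nonneg_left h ht'.le
    have := aux_cosh_le hD habs
    have heq : (t * η) ^ 2 / (t * d) ^ 2 = η ^ 2 / d ^ 2 := by
      rw [mul_pow, mul_pow, mul_div_mul_left]
      positivity
    rwa [heq] at this

lemma aux_sqrt {γ δ : ℝ} (hγ : 0 < γ) (hδ0 : 0 ≤ δ) (hδ1 : δ < 1) :
    1 ≤ (δ * (1 - γ) + Real.sqrt (δ ^ 2 * (1 - γ) ^ 2 + γ ^ 2 * (1 - δ ^ 2))) / (γ * (1 - δ)) := by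
  have hden : 0 < γ * (1 - δ) := mul_pos hγ (by linarith)
  rw [le_div_iff₀ hden, one_mul]
  have hsqrt : γ * (1 - δ) - δ * (1 - γ) ≤
      Real.sqrt (δ ^ 2 * (1 - γ) ^ 2 + γ ^ 2 * (1 - δ ^ 2)) := by
    rcases le_or_gt (γ * (1 - δ) - δ * (1 - γ)) 0 with h | h
    · exact h.trans (Real.sqrt_nonneg _)
    · rw [show γ * (1 - δ) - δ * (1 - γ) = |γ * (1 - δ) - δ * (1 - γ)| from (abs_of_pos h).symm]
      rw [← Real.sqrt_sq_eq_abs]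
      apply Real.sqrt_le_sqrt
      nlinarith [mul_nonneg (mul_nonneg hγ.le hδ0) (sub_nonneg.2 hδ1.le)]
  linarith

lemma aux_exp_bound {Ω : Type*} {m0 : MeasurableSpace Ω} {μ : Measure Ω} [IsProbabilityMeasure μ]
    {m : MeasurableSpace Ω} (hm : m ≤ m0) {Y : Ω → ℝ} (hYsm : StronglyMeasurable[m0] Y)
    (hsymm : ∀ g : ℝ → ℝ, Measurable g →
      μ[fun ω => g (Y ω - (μ[Y|m]) ω)|m] =ᵐ[μ] μ[fun ω => g (-(Y ω - (μ[Y|m]) ω))|m])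
    {d σ t : ℝ} (hd : 0 < d) (ht : 0 ≤ t)
    (hbdd : ∀ᵐ ω ∂μ, -d ≤ Y ω - (μ[Y|m]) ω)
    (hvar : ∀ᵐ ω ∂μ, (μ[fun ω => (Y ω - (μ[Y|m]) ω) ^ 2|m]) ω ≤ σ ^ 2) :
    μ[fun ω => Real.exp (-t * (Y ω - (μ[Y|m]) ω))|m] ≤ᵐ[μ]
      fun _ => 1 + σ ^ 2 / d ^ 2 * (Real.cosh (t * d) - 1) := by
  haveI : SigmaFinite (μ.trim hm) := by infer_instance
  set c : Ω → ℝ := μ[Y|m] with hc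
  have hηsm : StronglyMeasurable[m0] (fun ω => Y ω - c ω) :=
    hYsm.sub (stronglyMeasurable_condExp.mono hm)
  -- upper bound on the increment
  have hub : ∀ᵐ ω ∂μ, Y ω - c ω ≤ d := by
    set g : ℝ → ℝ := (Set.Ioi d).indicator (fun _ => (1 : ℝ)) with hgdef
    have hgmeas : Measurable g := measurable_const.indicator measurableSet_Ioi
    have h0 : (fun ω => g (-(Y ω - c ω))) =ᵐ[μ] (fun _ => (0 : ℝ)) := by
      filter_upwards [hbdd] with ω hω
      have hnot : -(Y ω - c ω) ∉ Set.Ioi d := by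
        simp only [Set.mem_Ioi, not_lt]; linarith
      simp only [hgdef, Set.indicator_of_notMem hnot]
    have hcond0 : μ[fun ω => g (Y ω - c ω)|m] =ᵐ[μ] (fun _ => (0 : ℝ)) := by
      refine (hsymm g hgmeas).trans ?_
      refine (condExp_congr_ae h0).trans ?_
      have hz : μ[(fun _ : Ω => (0 : ℝ))|m] = 0 := condExp_zero
      rw [hz]
      rfl
    have hnonneg : 0 ≤ᵐ[μ] fun ω => g (Y ω - c ω) := by
      refine Filter.Eventually.of_forall fun ω => ?_
      simp only [hgdef]
      exact Set.indicator_nonneg (fun _ _ => zero_le_one) _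
    have hint : Integrable (fun ω => g (Y ω - c ω)) μ := by
      have hmg : Measurable[m0] (fun ω => g (Y ω - c ω)) := hgmeas.comp hηsm.measurable
      refine (integrable_const (1 : ℝ)).mono' hmg.aestronglyMeasurable ?_
      refine Filter.Eventually.of_forall fun ω => ?_
      simp only [hgdef, Real.norm_eq_abs]
      by_cases hmem : Y ω - c ω ∈ Set.Ioi d
      · simp [Set.indicator_of_mem hmem]
      · simp [Set.indicator_of_notMem hmem]
    have hzero : ∫ ω, g (Y ω - c ω) ∂μ = 0 := by
      rw [← integral_condExp hm]
      rw [integral_congr_ae hcond0]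
      simp
    have hnonneg' : 0 ≤ fun ω => g (Y ω - c ω) := fun ω =>
      Set.indicator_nonneg (fun _ _ => zero_le_one) _
    have hae := (integral_eq_zero_iff_of_nonneg hnonneg' hint).1 hzero
    filter_upwards [hae] with ω hω
    by_contra hlt
    push_neg at hlt
    have : g (Y ω - c ω) = 1 := Set.indicator_of_mem (Set.mem_Ioi.2 hlt) _
    rw [hω] at this
    norm_num at this
  have habs : ∀ᵐ ω ∂μ, |Y ω - c ω| ≤ d := by
    filter_upwards [hbdd, hub] with ω h1 h2
    exact abs_le.2 ⟨by linarith, h2⟩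
  -- integrability of exponentials
  have hint : ∀ s : ℝ, |s| ≤ t → Integrable (fun ω => Real.exp (s * (Y ω - c ω))) μ := by
    intro s hs
    have hms : StronglyMeasurable[m0] (fun ω => Real.exp (s * (Y ω - c ω))) :=
      Real.continuous_exp.comp_stronglyMeasurable (hηsm.const_mul s)
    refine (integrable_const (Real.exp (t * d))).mono' hms.aestronglyMeasurable ?_
    filter_upwards [habs] with ω hω
    rw [Real.norm_eq_abs, Real.abs_exp, Real.exp_le_exp]
    calc s * (Y ω - c ω) ≤ |s * (Y ω - c ω)| := le_abs_self _
      _ = |s| * |Y ω - c ω| := abs_mul _ _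
      _ ≤ t * d := mul_le_mul hs hω (abs_nonneg _) ht
  have hint_neg : Integrable (fun ω => Real.exp (-t * (Y ω - c ω))) μ :=
    hint (-t) (by rw [abs_neg, abs_of_nonneg ht])
  have hint_pos : Integrable (fun ω => Real.exp (t * (Y ω - c ω))) μ :=
    hint t (by rw [abs_of_nonneg ht])
  -- symmetry
  have hsym2 := hsymm (fun x => Real.exp (-t * x)) (by fun_prop)
  simp only [mul_neg, neg_mul, neg_neg] at hsym2
  -- hsym2 : μ[exp (-(t * η))|m] =ᵐ μ[exp (t * η)|m]
  -- cosh identity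
  have hcosh_eq : (fun ω => Real.cosh (t * (Y ω - c ω)))
      = (2 : ℝ)⁻¹ • ((fun ω => Real.exp (t * (Y ω - c ω)))
        + fun ω => Real.exp (-(t * (Y ω - c ω)))) := by
    funext ω
    simp only [Pi.smul_apply, Pi.add_apply, smul_eq_mul, Real.cosh_eq]
    ring
  have h1 : μ[fun ω => Real.cosh (t * (Y ω - c ω))|m] =ᵐ[μ]
      μ[fun ω => Real.exp (-(t * (Y ω - c ω)))|m] := by
    rw [hcosh_eq]
    refine (condExp_smul ((2 : ℝ)⁻¹) _ m).trans ?_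
    have hadd := condExp_add (μ := μ) (m := m) hint_pos
      (by simpa only [neg_mul] using hint_neg)
    filter_upwards [hadd, hsym2] with ω h1ω h2ω
    simp only [Pi.smul_apply, smul_eq_mul]
    rw [h1ω]
    simp only [Pi.add_apply]
    rw [h2ω]
    ring
  -- pointwise bound by the quadratic
  set K : ℝ := Real.cosh (t * d) - 1 with hK
  have hK0 : 0 ≤ K := by rw [hK]; linarith [Real.one_le_cosh (t * d)]
  have hint_cosh : Integrable (fun ω => Real.cosh (t * (Y ω - c ω))) μ := by
    have hms : StronglyMeasurable[m0] (fun ω => Real.cosh (t * (Y ω - c ω))) :=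
      Real.continuous_cosh.comp_stronglyMeasurable (hηsm.const_mul t)
    refine (integrable_const (Real.cosh (t * d))).mono' hms.aestronglyMeasurable ?_
    filter_upwards [habs] with ω hω
    rw [Real.norm_eq_abs, abs_of_pos (Real.cosh_pos _)]
    rw [Real.cosh_le_cosh]
    rw [abs_mul, abs_of_nonneg ht, abs_mul, abs_of_nonneg ht, abs_of_nonneg hd.le]
    exact mul_le_mul_of_nonneg_left hω ht
  have hint_sq : Integrable (fun ω => (Y ω - c ω) ^ 2) μ := by
    have hms : StronglyMeasurable[m0] (fun ω => (Y ω - c ω) ^ 2) := hηsm.pow 2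
    refine (integrable_const (d ^ 2)).mono' hms.aestronglyMeasurable ?_
    filter_upwards [habs] with ω hω
    rw [Real.norm_eq_abs, abs_of_nonneg (sq_nonneg _), ← sq_abs]
    exact pow_le_pow_left₀ (abs_nonneg _) hω 2
  have hquad : (fun ω => Real.cosh (t * (Y ω - c ω))) ≤ᵐ[μ]
      (fun _ => (1:ℝ)) + (K / d ^ 2) • fun ω => (Y ω - c ω) ^ 2 := by
    filter_upwards [habs] with ω hω
    have := aux_cosh_le' ht hd hω
    simp only [Pi.add_apply, Pi.smul_apply, smul_eq_mul]
    calc Real.cosh (t * (Y ω - c ω)) ≤ 1 + (Y ω - c ω) ^ 2 / d ^ 2 * K := this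
      _ = 1 + K / d ^ 2 * (Y ω - c ω) ^ 2 := by ring
  have hint_quad : Integrable ((fun _ : Ω => (1:ℝ)) + (K / d ^ 2) • fun ω => (Y ω - c ω) ^ 2) μ :=
    (integrable_const 1).add (hint_sq.smul (K / d ^ 2))
  have h2 : μ[fun ω => Real.cosh (t * (Y ω - c ω))|m] ≤ᵐ[μ]
      μ[(fun _ : Ω => (1:ℝ)) + (K / d ^ 2) • fun ω => (Y ω - c ω) ^ 2|m] :=
    condExp_mono hint_cosh hint_quad hquad
  have h3 : μ[(fun _ : Ω => (1:ℝ)) + (K / d ^ 2) • fun ω => (Y ω - c ω) ^ 2|m] ≤ᵐ[μ]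
      fun _ => 1 + σ ^ 2 / d ^ 2 * K := by
    have ha := condExp_add (μ := μ) (m := m) (integrable_const (1:ℝ))
      (hint_sq.smul (K / d ^ 2))
    have hb := condExp_smul (μ := μ) (m := m) (K / d ^ 2) (fun ω => (Y ω - c ω) ^ 2)
    have hcst : μ[(fun _ : Ω => (1:ℝ))|m] = fun _ => (1:ℝ) := condExp_const hm 1
    filter_upwards [ha, hb, hvar] with ω haω hbω hvω
    rw [haω]
    simp only [Pi.add_apply, Pi.smul_apply, smul_eq_mul] at *
    rw [hcst] at *
    rw [hbω]
    have : K / d ^ 2 * (μ[fun ω => (Y ω - c ω) ^ 2|m]) ω ≤ K / d ^ 2 * σ ^ 2 :=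
      mul_le_mul_of_nonneg_left hvω (by positivity)
    calc 1 + K / d ^ 2 * (μ[fun ω => (Y ω - c ω) ^ 2|m]) ω ≤ 1 + K / d ^ 2 * σ ^ 2 := by linarith
      _ = 1 + σ ^ 2 / d ^ 2 * K := by ring
  -- combine
  have hfinal := h1.symm.le.trans (h2.trans h3)
  simpa only [neg_mul] using hfinal


/-- Corollary (submartingale case): exponential bound for conditionally symmetric
submartingales, where `η_k = X_k − E[X_k | F_{k−1}]`. -/
theorem conditionally_symmetric_submartingale_bound
    {Ω : Type*} {m0 : MeasurableSpace Ω} {μ : Measure Ω} [IsProbabilityMeasure μ]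
    {F : Filtration ℕ m0} {X : ℕ → Ω → ℝ}
    (hsub : Submartingale X F μ)
    (hsymm : ∀ k : ℕ, 1 ≤ k → ∀ g : ℝ → ℝ, Measurable g →
      μ[fun ω => g (X k ω - (μ[X k | F (k - 1)]) ω) | F (k - 1)]
        =ᵐ[μ] μ[fun ω => g (-(X k ω - (μ[X k | F (k - 1)]) ω)) | F (k - 1)])
    {d σ : ℝ} (hd : 0 < d) (hσ : 0 < σ)
    (hbdd : ∀ k : ℕ, 1 ≤ k → ∀ᵐ ω ∂μ, -d ≤ X k ω - (μ[X k | F (k - 1)]) ω)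
    (hvar : ∀ k : ℕ, 1 ≤ k → ∀ᵐ ω ∂μ,
      (μ[fun ω => (X k ω - (μ[X k | F (k - 1)]) ω) ^ 2 | F (k - 1)]) ω ≤ σ ^ 2)
    {α : ℝ} (hα : 0 ≤ α) (hδ : α / d < 1) (n : ℕ) (hn : 1 ≤ n) :
    μ {ω | ∃ k, 1 ≤ k ∧ k ≤ n ∧ X k ω - X 0 ω ≤ -(α * n)}
      ≤ ENNReal.ofReal (Real.exp (-(n : ℝ) * Eexp (σ ^ 2 / d ^ 2) (α / d))) := by
  classical
  have hγ : (0:ℝ) < σ ^ 2 / d ^ 2 := by positivity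
  have hδ0 : (0:ℝ) ≤ α / d := div_nonneg hα hd.le
  set γ : ℝ := σ ^ 2 / d ^ 2 with hγdef
  set δ : ℝ := α / d with hδdef
  set x₀ : ℝ := Real.log ((δ * (1 - γ) + Real.sqrt (δ ^ 2 * (1 - γ) ^ 2 + γ ^ 2 * (1 - δ ^ 2)))
      / (γ * (1 - δ))) with hx₀def
  have hx₀ : 0 ≤ x₀ := Real.log_nonneg (aux_sqrt hγ hδ0 hδ)
  set t : ℝ := x₀ / d with htdef
  have ht : 0 ≤ t := div_nonneg hx₀ hd.le
  have htd : t * d = x₀ := div_mul_cancel₀ x₀ hd.ne'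
  set ρ : ℝ := 1 + γ * (Real.cosh x₀ - 1) with hρdef
  have hρ1 : (1:ℝ) ≤ ρ := by
    have h1 := Real.one_le_cosh x₀
    nlinarith
  have hρ0 : (0:ℝ) < ρ := lt_of_lt_of_le one_pos hρ1
  -- the exponential process
  set M : ℕ → Ω → ℝ := fun k ω => Real.exp (t * (X 0 ω - X k ω)) / ρ ^ k with hM
  have hMpos : ∀ k ω, 0 < M k ω := fun k ω => by
    simp only [hM]; positivity
  have hM_adapted : StronglyAdapted F M := by
    intro k
    have h1 : StronglyMeasurable[F k] (fun ω =>
        Real.exp (t * (X 0 ω - X k ω)) * (ρ ^ k)⁻¹) :=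
      (Real.continuous_exp.comp_stronglyMeasurable
        ((((hsub.stronglyAdapted 0).mono (F.mono (Nat.zero_le k))).sub
          (hsub.stronglyAdapted k)).const_mul t)).mul_const _
    simpa [hM, div_eq_mul_inv] using h1
  have hstep_le : ∀ k : ℕ, ∀ᵐ ω ∂μ, X k ω - X (k+1) ω ≤ d := by
    intro k
    have h1 := hsub.2.1 k (k+1) (Nat.le_succ k)
    have h2 := hbdd (k+1) (Nat.le_add_left 1 k)
    simp only [Nat.add_sub_cancel] at h2
    filter_upwards [h1, h2] with ω hω1 hω2
    linarith
  have hbound : ∀ k : ℕ, ∀ᵐ ω ∂μ, X 0 ω - X k ω ≤ k * d := by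
    intro k
    induction k with
    | zero => simp
    | succ k ih =>
      filter_upwards [ih, hstep_le k] with ω h1 h2
      push_cast
      nlinarith
  have hM_int : ∀ k, Integrable (M k) μ := by
    intro k
    have hms : StronglyMeasurable[m0] (M k) := (hM_adapted k).mono (F.le k)
    refine (integrable_const (Real.exp (t * (k * d)) / ρ ^ k)).mono'
      hms.aestronglyMeasurable ?_
    filter_upwards [hbound k] with ω hω
    simp only [hM, Real.norm_eq_abs]
    rw [abs_of_pos (by positivity)]
    gcongr
  have hM_step : ∀ k : ℕ, μ[M (k+1)|F k] ≤ᵐ[μ] M k := by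
    intro k
    have h1k : 1 ≤ k + 1 := Nat.le_add_left 1 k
    have hsymm' := hsymm (k+1) h1k
    have hbdd' := hbdd (k+1) h1k
    have hvar' := hvar (k+1) h1k
    simp only [Nat.add_sub_cancel] at hsymm' hbdd' hvar'
    have hkey : μ[fun ω => Real.exp (-t * (X (k+1) ω - (μ[X (k+1)|F k]) ω))|F k] ≤ᵐ[μ]
        (fun _ => ρ) := by
      have h := aux_exp_bound (F.le k) ((hsub.stronglyAdapted (k+1)).mono (F.le (k+1)))
        hsymm' hd ht hbdd' hvar'
      rw [htd] at h
      exact h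
    set c : Ω → ℝ := μ[X (k+1)|F k] with hcdef
    set f : Ω → ℝ := fun ω => Real.exp (t * (X 0 ω - c ω)) / ρ ^ (k+1) with hfdef
    set g : Ω → ℝ := fun ω => Real.exp (-t * (X (k+1) ω - c ω)) with hgdef
    have hfeq : M (k+1) = f * g := by
      funext ω
      simp only [hM, hfdef, hgdef, Pi.mul_apply]
      have hexp : Real.exp (t * (X 0 ω - X (k+1) ω))
          = Real.exp (t * (X 0 ω - c ω)) * Real.exp (-t * (X (k+1) ω - c ω)) := by
        rw [← Real.exp_add]; congr 1; ring
      rw [hexp]; ring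
    have hf_meas : StronglyMeasurable[F k] f := by
      have h1 : StronglyMeasurable[F k] (fun ω =>
          Real.exp (t * (X 0 ω - c ω)) * (ρ ^ (k+1))⁻¹) :=
        (Real.continuous_exp.comp_stronglyMeasurable
          ((((hsub.stronglyAdapted 0).mono (F.mono (Nat.zero_le k))).sub
            stronglyMeasurable_condExp).const_mul t)).mul_const _
      simpa [hfdef, div_eq_mul_inv] using h1
    have hg_int : Integrable g μ := by
      have hms : StronglyMeasurable[m0] g := by
        refine Real.continuous_exp.comp_stronglyMeasurable ?_
        exact (((hsub.stronglyAdapted (k+1)).mono (F.le (k+1))).sub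
          (stronglyMeasurable_condExp.mono (F.le k))).const_mul (-t)
      refine (integrable_const (Real.exp (t * d))).mono' hms.aestronglyMeasurable ?_
      filter_upwards [hbdd'] with ω hω
      simp only [hgdef, Real.norm_eq_abs, Real.abs_exp, Real.exp_le_exp]
      nlinarith
    have hfg_int : Integrable (f * g) μ := by rw [← hfeq]; exact hM_int (k+1)
    have hpull : μ[M (k+1)|F k] =ᵐ[μ] f * μ[g|F k] := by
      rw [hfeq]
      exact condExp_mul_of_stronglyMeasurable_left hf_meas hfg_int hg_int
    have hXk : X k ≤ᵐ[μ] c := hsub.2.1 k (k+1) (Nat.le_succ k)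
    refine hpull.le.trans ?_
    filter_upwards [hkey, hXk] with ω h1 h2
    simp only [Pi.mul_apply]
    have hf0 : 0 ≤ f ω := by simp only [hfdef]; positivity
    calc f ω * (μ[g|F k]) ω ≤ f ω * ρ := mul_le_mul_of_nonneg_left h1 hf0
      _ ≤ M k ω := by
          simp only [hfdef, hM]
          rw [pow_succ]
          have hρk : (0:ℝ) < ρ ^ k := by positivity
          have hle : Real.exp (t * (X 0 ω - c ω)) ≤ Real.exp (t * (X 0 ω - X k ω)) := by
            rw [Real.exp_le_exp]
            exact mul_le_mul_of_nonneg_left (by linarith) ht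
          calc Real.exp (t * (X 0 ω - c ω)) / (ρ ^ k * ρ) * ρ
              = Real.exp (t * (X 0 ω - c ω)) / ρ ^ k := by field_simp
            _ ≤ Real.exp (t * (X 0 ω - X k ω)) / ρ ^ k := by gcongr
  have hM_super : Supermartingale M F μ := supermartingale_nat hM_adapted hM_int hM_step
  have hsubM : Submartingale (-M) F μ := hM_super.neg
  -- Ville's inequality at time n
  set ε : ℝ := Real.exp (t * (α * n)) / ρ ^ n with hεdef
  have hε0 : 0 < ε := by positivity
  set S : Set Ω := {ω | ε ≤ (Finset.range (n+1)).sup' Finset.nonempty_range_add_one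
    fun k => M k ω} with hSdef
  have hsubset : {ω | ∃ k, 1 ≤ k ∧ k ≤ n ∧ X k ω - X 0 ω ≤ -(α * n)} ⊆ S := by
    intro ω hω
    obtain ⟨k, hk1, hkn, hkle⟩ := hω
    rw [hSdef, Set.mem_setOf_eq]
    refine le_trans ?_ (Finset.le_sup' (fun k => M k ω)
      (Finset.mem_range.2 (Nat.lt_succ_of_le hkn)))
    simp only [hM, hεdef]
    have h1 : Real.exp (t * (α * n)) ≤ Real.exp (t * (X 0 ω - X k ω)) := by
      rw [Real.exp_le_exp]
      exact mul_le_mul_of_nonneg_left (by linarith) ht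
    have h2 : ρ ^ k ≤ ρ ^ n := pow_le_pow_right₀ hρ1 hkn
    exact div_le_div₀ (Real.exp_pos _).le h1 (by positivity) h2
  have hSmeas : MeasurableSet S := by
    rw [hSdef]
    exact measurableSet_le measurable_const
      (Finset.measurable_range_sup'' fun k _ => ((hM_adapted k).mono (F.le k)).measurable)
  set τ : Ω → WithTop ℕ := fun ω => (hittingBtwn M {y : ℝ | ε ≤ y} 0 n ω : ℕ) with hτdef
  have hτst : IsStoppingTime F τ := Adapted.isStoppingTime_hittingBtwn (fun k => (hM_adapted k).measurable) measurableSet_Ici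
  have hSVneg_int : Integrable (stoppedValue (-M) τ) μ :=
    hsubM.integrable_stoppedValue hτst fun ω => WithTop.coe_le_coe.2 (hittingBtwn_le ω)
  have hSVneg : stoppedValue (-M) τ = -(stoppedValue M τ) := by
    funext ω; simp [stoppedValue]
  have hSV_int : Integrable (stoppedValue M τ) μ := by
    have := hSVneg_int.neg
    rw [hSVneg] at this
    simpa using this
  have hSV_nonneg : 0 ≤ᵐ[μ] stoppedValue M τ :=
    Filter.Eventually.of_forall fun ω => (hMpos _ ω).le
  have hSV_ge : ∀ ω ∈ S, ε ≤ stoppedValue M τ ω := by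
    intro ω hω
    refine stoppedValue_hittingBtwn_mem ?_
    rw [hSdef, Set.mem_setOf_eq, Finset.le_sup'_iff] at hω
    obtain ⟨j, hj, hje⟩ := hω
    exact ⟨j, ⟨Nat.zero_le j, Nat.lt_succ_iff.1 (Finset.mem_range.1 hj)⟩, hje⟩
  have hmart : ∫ ω, stoppedValue M τ ω ∂μ ≤ 1 := by
    have h0 := hsubM.expected_stoppedValue_mono (isStoppingTime_const F 0) hτst
      (fun ω => WithTop.coe_le_coe.2 (Nat.zero_le _)) (fun ω => WithTop.coe_le_coe.2 (hittingBtwn_le ω))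
    rw [stoppedValue_const, hSVneg] at h0
    have hM0 : ∫ ω, (-M) 0 ω ∂μ = -1 := by
      have hfun : (-M) 0 = fun _ : Ω => (-1:ℝ) := by
        funext ω; simp [hM]
      rw [hfun]
      simp
    have hneg : ∫ ω, (-(stoppedValue M τ)) ω ∂μ = -∫ ω, stoppedValue M τ ω ∂μ := by
      simp only [Pi.neg_apply]
      exact integral_neg _
    rw [hM0, hneg] at h0
    linarith
  have key : ε * (μ S).toReal ≤ 1 := by
    have h1 := setIntegral_ge_of_const_le hSmeas (measure_ne_top μ S) hSV_ge
      hSV_int.integrableOn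
    have h2 : ∫ ω in S, stoppedValue M τ ω ∂μ ≤ ∫ ω, stoppedValue M τ ω ∂μ :=
      setIntegral_le_integral hSV_int hSV_nonneg
    rw [smul_eq_mul, measureReal_def] at h1
    linarith
  have hμS : μ S ≤ ENNReal.ofReal (1/ε) := by
    have hto : (μ S).toReal ≤ 1/ε := by
      rw [le_div_iff₀ hε0]
      linarith [key]
    calc μ S = ENNReal.ofReal (μ S).toReal := (ENNReal.ofReal_toReal (measure_ne_top μ S)).symm
      _ ≤ ENNReal.ofReal (1/ε) := ENNReal.ofReal_le_ofReal hto
  refine le_trans (measure_mono hsubset) (le_trans hμS (le_of_eq ?_))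
  congr 1
  have hE : Eexp γ δ = δ * x₀ - Real.log ρ := by rw [hρdef, hx₀def]; rfl
  have hαd : δ * d = α := div_mul_cancel₀ α hd.ne'
  have harg : t * (α * n) = (n:ℝ) * (δ * x₀) := by
    rw [← hαd, htdef]
    field_simp
  have e1 : Real.exp ((n:ℝ) * Real.log ρ) = ρ ^ n := by
    rw [Real.exp_nat_mul, Real.exp_log hρ0]
  have e2 : Real.exp (-(n:ℝ) * Eexp γ δ)
      = Real.exp ((n:ℝ) * Real.log ρ) * Real.exp (-(t * (α * n))) := by
    rw [← Real.exp_add]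
    congr 1
    rw [hE, harg]
    ring
  rw [e2, e1, hεdef, one_div_div, Real.exp_neg, div_eq_mul_inv]
end

section
/- Let {X_n, F_n}_{n≥0} be a discrete-time real-valued conditionally symmetric supermartingale, and let η_k = X_k − E[X_k | F_{k−1}]. Assume η_k ≤ d almost surely for every k ≥ 1, for some fixed d > 0, and let Q_n = Σ_{k=1}^n E[η_k² | F_{k−1}] (with Q_0 = 0). Then for every z, r > 0, P( max_{1≤k≤n} (X_k − X_0) ≥ z and Q_n ≤ r for some n ≥ 1 ) ≤ exp( −(z²/(2r)) · C(zd/r) ), where C(u) = 2[u·arcsinh(u) − √(1+u²) + 1]/u² for u > 0. -/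
open MeasureTheory ProbabilityTheory Filter Set



/-- `sinh x ≤ x * cosh x` for `x ≥ 0`. -/
lemma sinh_le_mul_cosh {x : ℝ} (hx : 0 ≤ x) : Real.sinh x ≤ x * Real.cosh x := by
  have h : ∀ y ∈ Set.Ici (0:ℝ), HasDerivAt (fun t => t * Real.cosh t - Real.sinh t)
      (y * Real.sinh y) y := by
    intro y _
    have h1 : HasDerivAt (fun t : ℝ => t * Real.cosh t) (Real.cosh y + y * Real.sinh y) y := by
      exact ((hasDerivAt_id' y).mul (Real.hasDerivAt_cosh y)).congr_deriv (by ring)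
    exact (h1.sub (Real.hasDerivAt_sinh y)).congr_deriv (by ring)
  have hmono : MonotoneOn (fun t => t * Real.cosh t - Real.sinh t) (Set.Ici (0:ℝ)) := by
    apply monotoneOn_of_deriv_nonneg (convex_Ici 0)
    · exact (Continuous.mul continuous_id Real.continuous_cosh).sub Real.continuous_sinh |>.continuousOn
    · intro y hy
      rw [interior_Ici, Set.mem_Ioi] at hy
      exact ((h y (Set.mem_Ici.2 (le_of_lt hy))).differentiableAt).differentiableWithinAt
    · intro y hy
      rw [interior_Ici, Set.mem_Ioi] at hy
      rw [(h y (Set.mem_Ici.2 hy.le)).deriv]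
      exact mul_nonneg hy.le (Real.sinh_nonneg_iff.2 hy.le)
  have := hmono (Set.self_mem_Ici) (Set.mem_Ici.2 hx) hx
  simp at this
  linarith

/-- `sinh s / s` is monotone: `sinh s * S ≤ sinh S * s` for `0 ≤ s ≤ S`. -/
lemma sinh_div_mono {s S : ℝ} (hs : 0 ≤ s) (hsS : s ≤ S) : Real.sinh s * S ≤ Real.sinh S * s := by
  rcases eq_or_lt_of_le hs with h0 | h0
  · simp [← h0]
  have hS : 0 < S := lt_of_lt_of_le h0 hsS
  have key : MonotoneOn (fun t => Real.sinh t / t) (Set.Ici s) := by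
    apply monotoneOn_of_deriv_nonneg (convex_Ici s)
    · exact (Real.continuous_sinh.continuousOn).div continuousOn_id
        (fun y hy => ne_of_gt (lt_of_lt_of_le h0 hy))
    · intro y hy
      rw [interior_Ici] at hy
      have hy0 : y ≠ 0 := ne_of_gt (lt_trans h0 hy)
      exact (Real.differentiable_sinh.differentiableAt.div differentiableAt_id hy0).differentiableWithinAt
    · intro y hy
      rw [interior_Ici] at hy
      have hy0 : 0 < y := lt_trans h0 hy
      have hder : HasDerivAt (fun t => Real.sinh t / t)
          ((Real.cosh y * y - Real.sinh y * 1) / y ^ 2) y :=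
        (Real.hasDerivAt_sinh y).div (hasDerivAt_id y) (ne_of_gt hy0)
      rw [hder.deriv]
      have := sinh_le_mul_cosh hy0.le
      have hsq : (0:ℝ) < y ^ 2 := by positivity
      apply div_nonneg _ hsq.le
      nlinarith
  have := key (Set.self_mem_Ici) (Set.mem_Ici.2 hsS) hsS
  rw [div_le_div_iff₀ h0 hS] at this
  linarith

/-- quadratic bound on cosh: for `|x| ≤ d`, `cosh (L x) - 1 ≤ (cosh (L d) - 1) x² / d²`. -/
lemma cosh_quad_bound {L d x : ℝ} (hL : 0 < L) (hd : 0 < d) (hx : |x| ≤ d) :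
    Real.cosh (L * x) - 1 ≤ (Real.cosh (L * d) - 1) * x ^ 2 / d ^ 2 := by
  have key : ∀ t : ℝ, Real.cosh t = 1 + 2 * Real.sinh (t / 2) ^ 2 := by
    intro t
    have := Real.cosh_two_mul (t / 2)
    have h2 := Real.cosh_sq (t / 2)
    rw [show 2 * (t / 2) = t by ring] at this
    linarith
  have ha : (0:ℝ) ≤ |x| := abs_nonneg x
  have hs : (0:ℝ) ≤ L * |x| / 2 := by positivity
  have hsS : L * |x| / 2 ≤ L * d / 2 := by nlinarith
  have hmono := sinh_div_mono hs hsS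
  have hxa : Real.cosh (L * x) = Real.cosh (L * |x|) := by
    rcases abs_cases x with ⟨h1, _⟩ | ⟨h1, _⟩
    · rw [h1]
    · rw [h1, mul_neg, Real.cosh_neg]
  rw [hxa, key (L * |x|), key (L * d)]
  have hsnn : 0 ≤ Real.sinh (L * |x| / 2) := Real.sinh_nonneg_iff.2 hs
  have hSnn : 0 ≤ Real.sinh (L * d / 2) := Real.sinh_nonneg_iff.2 (hs.trans hsS)
  -- from hmono : sinh s * (L*d/2) ≤ sinh S * (L*|x|/2)
  have h1 : Real.sinh (L * |x| / 2) * d ≤ Real.sinh (L * d / 2) * |x| := by nlinarith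
  have h2 : (Real.sinh (L * |x| / 2) * d) ^ 2 ≤ (Real.sinh (L * d / 2) * |x|) ^ 2 := by
    apply sq_le_sq' _ h1
    nlinarith
  have hx2 : |x| ^ 2 = x ^ 2 := sq_abs x
  have hd2 : (0:ℝ) < d ^ 2 := by positivity
  rw [le_div_iff₀ hd2]
  nlinarith [h2, hx2]

section Aux
variable {Ω : Type*} {m0 : MeasurableSpace Ω} (μ : Measure Ω)
  (F : Filtration ℕ m0) (X : ℕ → Ω → ℝ)

/-- martingale-difference part -/
noncomputable def eta (k : ℕ) : Ω → ℝ := fun ω => X k ω - (μ[X k | F (k - 1)]) ω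

/-- predictable quadratic variation increment -/
noncomputable def qv (k : ℕ) : Ω → ℝ :=
  μ[fun ω' => (X k ω' - (μ[X k | F (k - 1)]) ω') ^ 2 | F (k - 1)]

noncomputable def Ssum (n : ℕ) : Ω → ℝ := fun ω => ∑ k ∈ Finset.Icc 1 n, eta μ F X k ω
noncomputable def Qsum (n : ℕ) : Ω → ℝ := fun ω => ∑ k ∈ Finset.Icc 1 n, qv μ F X k ω
noncomputable def Mart (lam c : ℝ) (n : ℕ) : Ω → ℝ :=
  fun ω => Real.exp (lam * Ssum μ F X n ω - c * Qsum μ F X n ω)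
def Tset (z : ℝ) (n : ℕ) : Set Ω := {ω | ∀ k, 1 ≤ k → k ≤ n → Ssum μ F X k ω < z}
def Hset (z : ℝ) (k : ℕ) : Set Ω := Tset μ F X z (k - 1) ∩ {ω | z ≤ Ssum μ F X k ω}

lemma qv_eq (k : ℕ) : qv μ F X k = μ[fun ω => eta μ F X k ω ^ 2 | F (k - 1)] := rfl

variable {μ F X}

lemma eta_sm (ha : StronglyAdapted F X) (k : ℕ) : StronglyMeasurable[F k] (eta μ F X k) :=
  (ha k).sub (stronglyMeasurable_condExp.mono (F.mono (Nat.sub_le k 1)))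

lemma qv_sm (k : ℕ) : StronglyMeasurable[F (k - 1)] (qv μ F X k) := stronglyMeasurable_condExp

lemma Ssum_sm (ha : StronglyAdapted F X) (n : ℕ) : StronglyMeasurable[F n] (Ssum μ F X n) := by
  apply Finset.stronglyMeasurable_fun_sum
  intro k hk
  exact (eta_sm ha k).mono (F.mono (Finset.mem_Icc.1 hk).2)

lemma Qsum_sm (n : ℕ) : StronglyMeasurable[F n] (Qsum μ F X n) := by
  apply Finset.stronglyMeasurable_fun_sum
  intro k hk
  exact (qv_sm k).mono (F.mono ((Nat.sub_le k 1).trans (Finset.mem_Icc.1 hk).2))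

lemma Mart_sm (ha : StronglyAdapted F X) (lam c : ℝ) (n : ℕ) :
    StronglyMeasurable[F n] (Mart μ F X lam c n) :=
  (Real.continuous_exp.comp_stronglyMeasurable
    (((Ssum_sm ha n).const_mul lam).sub ((Qsum_sm n).const_mul c)))

lemma Tset_meas (ha : StronglyAdapted F X) (z : ℝ) (n : ℕ) : MeasurableSet[F n] (Tset μ F X z n) := by
  have : Tset μ F X z n = ⋂ (k) (_ : 1 ≤ k) (_ : k ≤ n), {ω | Ssum μ F X k ω < z} := by
    ext ω; simp [Tset]
  rw [this]
  refine MeasurableSet.iInter fun k => MeasurableSet.iInter fun _ => MeasurableSet.iInter fun hk =>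
    ?_
  exact ((Ssum_sm ha k).mono (F.mono hk)).measurable measurableSet_Iio

lemma Hset_meas (ha : StronglyAdapted F X) (z : ℝ) (k : ℕ) : MeasurableSet[F k] (Hset μ F X z k) :=
  (F.mono (Nat.sub_le k 1) _ (Tset_meas ha z (k - 1))).inter
    ((Ssum_sm ha k).measurable measurableSet_Ici)


variable [IsProbabilityMeasure μ]

lemma eta_abs_le (ha : StronglyAdapted F X) {d : ℝ}
    (hsymm : ∀ k : ℕ, 1 ≤ k → ∀ g : ℝ → ℝ, Measurable g →
      μ[fun ω => g (eta μ F X k ω) | F (k - 1)]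
        =ᵐ[μ] μ[fun ω => g (-(eta μ F X k ω)) | F (k - 1)])
    (hbdd : ∀ k : ℕ, 1 ≤ k → ∀ᵐ ω ∂μ, eta μ F X k ω ≤ d)
    (k : ℕ) (hk : 1 ≤ k) : ∀ᵐ ω ∂μ, |eta μ F X k ω| ≤ d := by
  set η := eta μ F X k with hη
  have hmeas : Measurable (eta μ F X k) := ((eta_sm ha k).mono (F.le k)).measurable
  set g : ℝ → ℝ := (Set.Iio (-d)).indicator (fun _ => (1:ℝ)) with hg
  have hgm : Measurable g := measurable_const.indicator measurableSet_Iio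
  have h1 := hsymm k hk g hgm
  have int1 : Integrable (fun ω => g (η ω)) μ := by
    refine (integrable_const (1:ℝ)).mono' (hgm.comp hmeas).aestronglyMeasurable ?_
    refine ae_of_all _ fun ω => ?_
    rw [hg]
    by_cases h : η ω ∈ Set.Iio (-d) <;>
      simp [Set.indicator_of_mem, Set.indicator_of_notMem, h]
  have int2 : Integrable (fun ω => g (-η ω)) μ := by
    refine (integrable_const (1:ℝ)).mono' (hgm.comp hmeas.neg).aestronglyMeasurable ?_
    refine ae_of_all _ fun ω => ?_
    rw [hg]
    by_cases h : -η ω ∈ Set.Iio (-d) <;>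
      simp [Set.indicator_of_mem, Set.indicator_of_notMem, h]
  have key : ∫ ω, g (η ω) ∂μ = ∫ ω, g (-η ω) ∂μ := by
    have e1 := integral_condExp (μ := μ) (f := fun ω => g (η ω)) (F.le (k - 1))
    have e2 := integral_condExp (μ := μ) (f := fun ω => g (-η ω)) (F.le (k - 1))
    rw [← e1, ← e2]
    exact integral_congr_ae h1
  have hzero : ∫ ω, g (-η ω) ∂μ = 0 := by
    rw [integral_eq_zero_iff_of_nonneg]
    · filter_upwards [hbdd k hk] with ω hω
      have : -η ω ∉ Set.Iio (-d) := by simp only [Set.mem_Iio, not_lt]; linarith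
      simp [hg, Set.indicator_of_notMem this]
    · intro ω
      rw [hg]
      by_cases h : -η ω ∈ Set.Iio (-d) <;>
        simp [Set.indicator_of_mem, Set.indicator_of_notMem, h]
    · exact int2
  have hμ0 : μ {ω | η ω < -d} = 0 := by
    have hset : MeasurableSet {ω | η ω < -d} := measurableSet_lt hmeas measurable_const
    have : ∫ ω, g (η ω) ∂μ = (μ {ω | η ω < -d}).toReal := by
      rw [show (fun ω => g (η ω)) = Set.indicator {ω | η ω < -d} (fun _ => (1:ℝ)) by
        ext ω
        simp [hg, Set.indicator_apply, Set.mem_Iio, Set.mem_setOf_eq]]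
      exact integral_indicator_one hset
    rw [key, hzero] at this
    exact (ENNReal.toReal_eq_zero_iff _).1 this.symm |>.resolve_right (measure_ne_top μ _)
  have hae : ∀ᵐ ω ∂μ, ¬ η ω < -d := by
    rw [ae_iff]
    simpa using hμ0
  filter_upwards [hbdd k hk, hae] with ω h1 h2
  rw [abs_le]
  exact ⟨not_lt.1 h2, h1⟩

lemma qv_nonneg (k : ℕ) : 0 ≤ᵐ[μ] qv μ F X k := by
  rw [qv_eq]
  exact condExp_nonneg (ae_of_all _ fun ω => sq_nonneg _)

lemma eta_sq_int (ha : StronglyAdapted F X) {d : ℝ} (k : ℕ)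
    (habs : ∀ᵐ ω ∂μ, |eta μ F X k ω| ≤ d) :
    Integrable (fun ω => eta μ F X k ω ^ 2) μ := by
  have hmeas : Measurable (eta μ F X k) := ((eta_sm ha k).mono (F.le k)).measurable
  refine (integrable_const (d ^ 2)).mono' (hmeas.pow_const 2).aestronglyMeasurable ?_
  filter_upwards [habs] with ω hω
  rw [Real.norm_eq_abs, abs_pow]
  have h0 : (0:ℝ) ≤ |eta μ F X k ω| := abs_nonneg _
  nlinarith

lemma qv_le_sq (ha : StronglyAdapted F X) {d : ℝ} (k : ℕ)
    (habs : ∀ᵐ ω ∂μ, |eta μ F X k ω| ≤ d) :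
    qv μ F X k ≤ᵐ[μ] fun _ => d ^ 2 := by
  rw [qv_eq]
  have h1 : μ[fun ω => eta μ F X k ω ^ 2 | F (k - 1)] ≤ᵐ[μ] μ[fun _ => d ^ 2 | F (k - 1)] := by
    refine condExp_mono (eta_sq_int ha k habs) (integrable_const _) ?_
    filter_upwards [habs] with ω hω
    calc eta μ F X k ω ^ 2 = |eta μ F X k ω| ^ 2 := (sq_abs _).symm
      _ ≤ d ^ 2 := pow_le_pow_left₀ (abs_nonneg _) hω 2
  refine h1.trans (EventuallyEq.le ?_)
  rw [condExp_const (F.le (k - 1))]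

lemma mgf_bound (ha : StronglyAdapted F X) {d lam : ℝ} (hd : 0 < d) (hlam : 0 < lam)
    (hsymm : ∀ k : ℕ, 1 ≤ k → ∀ g : ℝ → ℝ, Measurable g →
      μ[fun ω => g (eta μ F X k ω) | F (k - 1)]
        =ᵐ[μ] μ[fun ω => g (-(eta μ F X k ω)) | F (k - 1)])
    (k : ℕ) (hk : 1 ≤ k)
    (habs : ∀ᵐ ω ∂μ, |eta μ F X k ω| ≤ d) :
    μ[fun ω => Real.exp (lam * eta μ F X k ω) | F (k - 1)]
      ≤ᵐ[μ] fun ω => Real.exp ((Real.cosh (lam * d) - 1) / d ^ 2 * qv μ F X k ω) := by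
  set c : ℝ := (Real.cosh (lam * d) - 1) / d ^ 2 with hc
  have hc0 : 0 ≤ c := by
    have := Real.one_le_cosh (lam * d)
    have hd2 : (0:ℝ) < d ^ 2 := by positivity
    apply div_nonneg <;> linarith
  have hmeas : Measurable (eta μ F X k) := ((eta_sm ha k).mono (F.le k)).measurable
  have intp : Integrable (fun ω => Real.exp (lam * eta μ F X k ω)) μ := by
    refine (integrable_const (Real.exp (lam * d))).mono'
      (Real.measurable_exp.comp (hmeas.const_mul lam)).aestronglyMeasurable ?_
    filter_upwards [habs] with ω hω
    rw [Real.norm_eq_abs, Real.abs_exp]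
    apply Real.exp_le_exp.2
    have := le_of_abs_le hω
    nlinarith
  have intm : Integrable (fun ω => Real.exp (lam * -eta μ F X k ω)) μ := by
    refine (integrable_const (Real.exp (lam * d))).mono'
      (Real.measurable_exp.comp (hmeas.neg.const_mul lam)).aestronglyMeasurable ?_
    filter_upwards [habs] with ω hω
    rw [Real.norm_eq_abs, Real.abs_exp]
    apply Real.exp_le_exp.2
    have := neg_abs_le (eta μ F X k ω)
    nlinarith
  have h1 : μ[fun ω => Real.exp (lam * eta μ F X k ω) | F (k - 1)]
      =ᵐ[μ] μ[fun ω => Real.exp (lam * -eta μ F X k ω) | F (k - 1)] :=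
    hsymm k hk (fun x => Real.exp (lam * x))
      (Real.measurable_exp.comp (measurable_id.const_mul lam))
  have intsq : Integrable (fun ω => eta μ F X k ω ^ 2) μ := eta_sq_int ha k habs
  have intbd : Integrable (fun ω => 2 + (2 * c) * eta μ F X k ω ^ 2) μ :=
    (integrable_const (2:ℝ)).add (intsq.const_mul (2 * c))
  have hsum := condExp_add (μ := μ) (m := F (k - 1)) intp intm
  have hmono : μ[(fun ω => Real.exp (lam * eta μ F X k ω))
        + (fun ω => Real.exp (lam * -eta μ F X k ω)) | F (k - 1)]
      ≤ᵐ[μ] μ[fun ω => 2 + (2 * c) * eta μ F X k ω ^ 2 | F (k - 1)] := by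
    refine condExp_mono (intp.add intm) intbd ?_
    filter_upwards [habs] with ω hω
    have hcosh := cosh_quad_bound hlam hd hω
    have heq : Real.cosh (lam * eta μ F X k ω)
        = (Real.exp (lam * eta μ F X k ω) + Real.exp (lam * -eta μ F X k ω)) / 2 := by
      rw [Real.cosh_eq]; ring_nf
    simp only [Pi.add_apply]
    have hcx : (Real.cosh (lam * d) - 1) * eta μ F X k ω ^ 2 / d ^ 2
        = c * eta μ F X k ω ^ 2 := by rw [hc]; ring
    rw [hcx] at hcosh
    linarith [hcosh]
  have hbd : μ[fun ω => 2 + (2 * c) * eta μ F X k ω ^ 2 | F (k - 1)]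
      =ᵐ[μ] fun ω => 2 + (2 * c) * qv μ F X k ω := by
    have e0 : (fun ω => 2 + (2 * c) * eta μ F X k ω ^ 2)
        = (fun _ : Ω => (2:ℝ)) + (2 * c) • (fun ω => eta μ F X k ω ^ 2) := by
      funext ω; simp [smul_eq_mul]
    rw [e0]
    refine (condExp_add (integrable_const _) (intsq.smul (2 * c)) (F (k - 1))).trans ?_
    have h2 : μ[(2 * c) • (fun ω => eta μ F X k ω ^ 2) | F (k - 1)]
        =ᵐ[μ] (2 * c) • μ[fun ω => eta μ F X k ω ^ 2 | F (k - 1)] :=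
      condExp_smul (2 * c) _ (F (k - 1))
    filter_upwards [h2] with ω hω
    simp only [Pi.add_apply, Pi.smul_apply, smul_eq_mul] at *
    rw [condExp_const (F.le (k - 1)), hω, ← qv_eq]
  set CEp : Ω → ℝ := μ[fun ω => Real.exp (lam * eta μ F X k ω) | F (k - 1)] with hCEp
  set CEm : Ω → ℝ := μ[fun ω => Real.exp (lam * -eta μ F X k ω) | F (k - 1)] with hCEm
  filter_upwards [h1, hsum, hmono, hbd] with ω e1 e2 e3 e4
  simp only [Pi.add_apply] at e2 e3
  rw [e2, e4] at e3
  rw [← e1] at e3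
  have key : CEp ω ≤ 1 + c * qv μ F X k ω := by linarith
  refine key.trans ?_
  have := Real.add_one_le_exp (c * qv μ F X k ω)
  linarith

lemma Tset_zero (z : ℝ) : Tset μ F X z 0 = Set.univ := by
  ext ω; simp only [Tset, Set.mem_setOf_eq, Set.mem_univ, iff_true]
  intro k hk hk0; omega

lemma Tset_succ (z : ℝ) (n : ℕ) :
    Tset μ F X z (n + 1) = Tset μ F X z n ∩ {ω | Ssum μ F X (n + 1) ω < z} := by
  ext ω
  simp only [Tset, Set.mem_setOf_eq, Set.mem_inter_iff]
  constructor
  · intro h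
    exact ⟨fun k hk hkn => h k hk (hkn.trans (Nat.le_succ n)), h (n + 1) (by omega) le_rfl⟩
  · rintro ⟨h1, h2⟩ k hk hkn
    rcases Nat.lt_or_ge k (n + 1) with h | h
    · exact h1 k hk (by omega)
    · have : k = n + 1 := by omega
      rw [this]; exact h2

lemma Mart_zero (lam c : ℝ) : Mart μ F X lam c 0 = fun _ => 1 := by
  funext ω
  simp [Mart, Ssum, Qsum]

lemma Ssum_succ (n : ℕ) (ω : Ω) :
    Ssum μ F X (n + 1) ω = Ssum μ F X n ω + eta μ F X (n + 1) ω :=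
  Finset.sum_Icc_succ_top (Nat.succ_le_succ (Nat.zero_le n)) _

lemma Qsum_succ (n : ℕ) (ω : Ω) :
    Qsum μ F X (n + 1) ω = Qsum μ F X n ω + qv μ F X (n + 1) ω :=
  Finset.sum_Icc_succ_top (Nat.succ_le_succ (Nat.zero_le n)) _

lemma Mart_succ (lam c : ℝ) (n : ℕ) (ω : Ω) :
    Mart μ F X lam c (n + 1) ω
      = Mart μ F X lam c n ω * Real.exp (-c * qv μ F X (n + 1) ω)
        * Real.exp (lam * eta μ F X (n + 1) ω) := by
  simp only [Mart, Ssum_succ, Qsum_succ, ← Real.exp_add]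
  ring_nf

lemma Mart_pos (lam c : ℝ) (n : ℕ) (ω : Ω) : 0 < Mart μ F X lam c n ω := Real.exp_pos _

lemma Ssum_le (ha : StronglyAdapted F X) {d : ℝ}
    (habs : ∀ k : ℕ, 1 ≤ k → ∀ᵐ ω ∂μ, |eta μ F X k ω| ≤ d) (n : ℕ) :
    ∀ᵐ ω ∂μ, Ssum μ F X n ω ≤ n * d := by
  have : ∀ᵐ ω ∂μ, ∀ k, k ∈ Finset.Icc 1 n → |eta μ F X k ω| ≤ d := by
    rw [ae_all_iff]
    intro k
    by_cases hk : k ∈ Finset.Icc 1 n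
    · filter_upwards [habs k (Finset.mem_Icc.1 hk).1] with ω h _
      exact h
    · filter_upwards with ω h
      exact absurd h hk
  filter_upwards [this] with ω hω
  calc Ssum μ F X n ω ≤ ∑ k ∈ Finset.Icc 1 n, d := by
        refine Finset.sum_le_sum fun k hk => le_of_abs_le (hω k hk)
    _ = (Finset.Icc 1 n).card • d := Finset.sum_const d
    _ ≤ n * d := by
        rw [Nat.card_Icc, nsmul_eq_mul]
        simp

lemma Qsum_nonneg_ae (n : ℕ) : ∀ᵐ ω ∂μ, 0 ≤ Qsum μ F X n ω := by
  have : ∀ᵐ ω ∂μ, ∀ k, k ∈ Finset.Icc 1 n → 0 ≤ qv μ F X k ω := by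
    rw [ae_all_iff]
    intro k
    by_cases hk : k ∈ Finset.Icc 1 n
    · filter_upwards [qv_nonneg (μ := μ) (F := F) (X := X) k] with ω h _
      exact h
    · filter_upwards with ω h
      exact absurd h hk
  filter_upwards [this] with ω hω
  exact Finset.sum_nonneg hω

lemma Mart_ae_le (ha : StronglyAdapted F X) {d lam c : ℝ} (hlam : 0 < lam) (hc0 : 0 ≤ c)
    (habs : ∀ k : ℕ, 1 ≤ k → ∀ᵐ ω ∂μ, |eta μ F X k ω| ≤ d) (n : ℕ) :
    ∀ᵐ ω ∂μ, Mart μ F X lam c n ω ≤ Real.exp (lam * (n * d)) := by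
  filter_upwards [Ssum_le ha habs n, Qsum_nonneg_ae (μ := μ) (F := F) (X := X) n] with ω h1 h2
  apply Real.exp_le_exp.2
  nlinarith

lemma Mart_int (ha : StronglyAdapted F X) {d lam c : ℝ} (hlam : 0 < lam) (hc0 : 0 ≤ c)
    (habs : ∀ k : ℕ, 1 ≤ k → ∀ᵐ ω ∂μ, |eta μ F X k ω| ≤ d) (n : ℕ) :
    Integrable (Mart μ F X lam c n) μ := by
  refine (integrable_const (Real.exp (lam * (n * d)))).mono'
    ((Mart_sm ha lam c n).mono (F.le n)).aestronglyMeasurable ?_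
  filter_upwards [Mart_ae_le ha hlam hc0 habs n] with ω hω
  rw [Real.norm_eq_abs, abs_of_pos (Mart_pos lam c n ω)]
  exact hω

lemma step_ineq (ha : StronglyAdapted F X) {d lam z : ℝ} (hd : 0 < d) (hlam : 0 < lam)
    (hsymm : ∀ k : ℕ, 1 ≤ k → ∀ g : ℝ → ℝ, Measurable g →
      μ[fun ω => g (eta μ F X k ω) | F (k - 1)]
        =ᵐ[μ] μ[fun ω => g (-(eta μ F X k ω)) | F (k - 1)])
    (habs : ∀ k : ℕ, 1 ≤ k → ∀ᵐ ω ∂μ, |eta μ F X k ω| ≤ d) (n : ℕ) :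
    ∫ ω, (Tset μ F X z n).indicator
        (Mart μ F X lam ((Real.cosh (lam * d) - 1) / d ^ 2) (n + 1)) ω ∂μ
      ≤ ∫ ω, (Tset μ F X z n).indicator
        (Mart μ F X lam ((Real.cosh (lam * d) - 1) / d ^ 2) n) ω ∂μ := by
  set c : ℝ := (Real.cosh (lam * d) - 1) / d ^ 2 with hc
  have hc0 : 0 ≤ c := by
    have := Real.one_le_cosh (lam * d)
    have hd2 : (0:ℝ) < d ^ 2 := by positivity
    apply div_nonneg <;> linarith
  have hq_sm : StronglyMeasurable[F n] (qv μ F X (n + 1)) := qv_sm (n + 1)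
  have hmeas_eta : Measurable (eta μ F X (n + 1)) :=
    ((eta_sm ha (n + 1)).mono (F.le (n + 1))).measurable
  set f : Ω → ℝ := (Tset μ F X z n).indicator
    (fun ω => Mart μ F X lam c n ω * Real.exp (-c * qv μ F X (n + 1) ω)) with hf
  set g : Ω → ℝ := fun ω => Real.exp (lam * eta μ F X (n + 1) ω) with hgdef
  have hf_sm : StronglyMeasurable[F n] f :=
    ((Mart_sm ha lam c n).mul
      (Real.continuous_exp.comp_stronglyMeasurable (hq_sm.const_mul (-c)))).indicator
      (Tset_meas ha z n)
  have hf_nonneg : ∀ ω, 0 ≤ f ω := fun ω =>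
    Set.indicator_nonneg (fun ω _ => mul_nonneg (Mart_pos lam c n ω).le (Real.exp_pos _).le) ω
  have hf_le : ∀ᵐ ω ∂μ, f ω ≤ Real.exp (lam * (n * d)) := by
    filter_upwards [Mart_ae_le ha hlam hc0 habs n, qv_nonneg (μ := μ) (F := F) (X := X) (n + 1)]
      with ω h1 h2
    rw [hf]
    by_cases hω : ω ∈ Tset μ F X z n
    · rw [Set.indicator_of_mem hω]
      have he1 : Real.exp (-c * qv μ F X (n + 1) ω) ≤ 1 := by
        rw [← Real.exp_zero]
        apply Real.exp_le_exp.2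
        nlinarith [mul_nonneg hc0 h2]
      nlinarith [Mart_pos (μ := μ) (F := F) (X := X) lam c n ω, Real.exp_pos (lam * (n * d)),
        Real.exp_pos (-c * qv μ F X (n + 1) ω)]
    · rw [Set.indicator_of_notMem hω]
      positivity
  have hg_meas : Measurable g := Real.measurable_exp.comp (hmeas_eta.const_mul lam)
  have int_g : Integrable g μ := by
    refine (integrable_const (Real.exp (lam * d))).mono' hg_meas.aestronglyMeasurable ?_
    filter_upwards [habs (n + 1) (by omega)] with ω hω
    rw [hgdef, Real.norm_eq_abs, Real.abs_exp]
    apply Real.exp_le_exp.2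
    have := le_of_abs_le hω
    nlinarith
  have hg_le : ∀ᵐ ω ∂μ, g ω ≤ Real.exp (lam * d) := by
    filter_upwards [habs (n + 1) (by omega)] with ω hω
    rw [hgdef]
    apply Real.exp_le_exp.2
    have := le_of_abs_le hω
    nlinarith
  have int_f : Integrable f μ :=
    (integrable_const (Real.exp (lam * (n * d)))).mono'
      ((hf_sm.mono (F.le n)).aestronglyMeasurable)
      (by filter_upwards [hf_le] with ω h; rw [Real.norm_eq_abs, abs_of_nonneg (hf_nonneg ω)];
          exact h)
  have int_fg : Integrable (f * g) μ := by
    refine (integrable_const (Real.exp (lam * (n * d)) * Real.exp (lam * d))).mono'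
      ((hf_sm.mono (F.le n)).mul hg_meas.stronglyMeasurable).aestronglyMeasurable ?_
    filter_upwards [hf_le, hg_le] with ω h1 h2
    rw [Pi.mul_apply, Real.norm_eq_abs, abs_mul, abs_of_nonneg (hf_nonneg ω),
      Real.abs_exp]
    exact mul_le_mul h1 h2 (Real.exp_pos _).le (Real.exp_pos _).le
  have h_pull : μ[f * g | F n] =ᵐ[μ] f * μ[g | F n] :=
    condExp_mul_of_stronglyMeasurable_left hf_sm int_fg int_g
  have hmgf : μ[g | F n] ≤ᵐ[μ] fun ω => Real.exp (c * qv μ F X (n + 1) ω) :=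
    mgf_bound ha hd hlam hsymm (n + 1) (by omega) (habs (n + 1) (by omega))
  have int_left : Integrable (f * μ[g | F n]) μ := integrable_condExp.congr h_pull
  have int_right : Integrable (fun ω => f ω * Real.exp (c * qv μ F X (n + 1) ω)) μ := by
    refine (integrable_const (Real.exp (lam * (n * d)) * Real.exp (c * d ^ 2))).mono'
      (((hf_sm.mono (F.le n)).mul
        (Real.continuous_exp.comp_stronglyMeasurable
          ((qv_sm (n + 1)).mono (F.le n) |>.const_mul c))).aestronglyMeasurable) ?_
    filter_upwards [hf_le, qv_le_sq ha (n + 1) (habs (n + 1) (by omega))] with ω h1 h2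
    rw [Real.norm_eq_abs, abs_mul, abs_of_nonneg (hf_nonneg ω), Real.abs_exp]
    refine mul_le_mul h1 (Real.exp_le_exp.2 ?_) (Real.exp_pos _).le (Real.exp_pos _).le
    nlinarith [h2]
  have eq1 : (Tset μ F X z n).indicator (Mart μ F X lam c (n + 1)) = f * g := by
    funext ω
    rw [Pi.mul_apply, hf]
    by_cases hω : ω ∈ Tset μ F X z n
    · rw [Set.indicator_of_mem hω, Set.indicator_of_mem hω, Mart_succ]
    · rw [Set.indicator_of_notMem hω, Set.indicator_of_notMem hω, zero_mul]
  have eq2 : (fun ω => f ω * Real.exp (c * qv μ F X (n + 1) ω))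
      = (Tset μ F X z n).indicator (Mart μ F X lam c n) := by
    funext ω
    rw [hf]
    by_cases hω : ω ∈ Tset μ F X z n
    · rw [Set.indicator_of_mem hω, Set.indicator_of_mem hω, mul_assoc, ← Real.exp_add]
      rw [show -c * qv μ F X (n + 1) ω + c * qv μ F X (n + 1) ω = 0 by ring, Real.exp_zero,
        mul_one]
    · rw [Set.indicator_of_notMem hω, Set.indicator_of_notMem hω, zero_mul]
  calc ∫ ω, (Tset μ F X z n).indicator (Mart μ F X lam c (n + 1)) ω ∂μ
      = ∫ ω, (f * g) ω ∂μ := by rw [eq1]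
    _ = ∫ ω, (μ[f * g | F n]) ω ∂μ := (integral_condExp (F.le n)).symm
    _ = ∫ ω, (f * μ[g | F n]) ω ∂μ := integral_congr_ae h_pull
    _ ≤ ∫ ω, f ω * Real.exp (c * qv μ F X (n + 1) ω) ∂μ := by
        refine integral_mono_ae int_left int_right ?_
        filter_upwards [hmgf] with ω hω
        rw [Pi.mul_apply]
        exact mul_le_mul_of_nonneg_left hω (hf_nonneg ω)
    _ = ∫ ω, (Tset μ F X z n).indicator (Mart μ F X lam c n) ω ∂μ := by rw [eq2]

lemma partial_bound (ha : StronglyAdapted F X) {d lam z : ℝ} (hd : 0 < d) (hlam : 0 < lam)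
    (hsymm : ∀ k : ℕ, 1 ≤ k → ∀ g : ℝ → ℝ, Measurable g →
      μ[fun ω => g (eta μ F X k ω) | F (k - 1)]
        =ᵐ[μ] μ[fun ω => g (-(eta μ F X k ω)) | F (k - 1)])
    (habs : ∀ k : ℕ, 1 ≤ k → ∀ᵐ ω ∂μ, |eta μ F X k ω| ≤ d) (n : ℕ) :
    (∑ j ∈ Finset.Icc 1 n, ∫ ω, (Hset μ F X z j).indicator
        (Mart μ F X lam ((Real.cosh (lam * d) - 1) / d ^ 2) j) ω ∂μ)
      + ∫ ω, (Tset μ F X z n).indicator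
        (Mart μ F X lam ((Real.cosh (lam * d) - 1) / d ^ 2) n) ω ∂μ ≤ 1 := by
  set c : ℝ := (Real.cosh (lam * d) - 1) / d ^ 2 with hc
  have hc0 : 0 ≤ c := by
    have := Real.one_le_cosh (lam * d)
    have hd2 : (0:ℝ) < d ^ 2 := by positivity
    apply div_nonneg <;> linarith
  induction n with
  | zero =>
    rw [Finset.Icc_eq_empty (by omega), Finset.sum_empty, Tset_zero, Mart_zero,
      Set.indicator_univ]
    simp
  | succ n ih =>
    have intM : Integrable (Mart μ F X lam c (n + 1)) μ := Mart_int ha hlam hc0 habs (n + 1)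
    have intH : Integrable ((Hset μ F X z (n + 1)).indicator (Mart μ F X lam c (n + 1))) μ :=
      intM.indicator (F.le (n + 1) _ (Hset_meas ha z (n + 1)))
    have intT : Integrable ((Tset μ F X z (n + 1)).indicator (Mart μ F X lam c (n + 1))) μ :=
      intM.indicator (F.le (n + 1) _
        (Tset_meas ha z (n + 1)))
    have split : ∀ ω, (Hset μ F X z (n + 1)).indicator (Mart μ F X lam c (n + 1)) ω
        + (Tset μ F X z (n + 1)).indicator (Mart μ F X lam c (n + 1)) ω
        = (Tset μ F X z n).indicator (Mart μ F X lam c (n + 1)) ω := by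
      intro ω
      have hH : ω ∈ Hset μ F X z (n + 1)
          ↔ ω ∈ Tset μ F X z n ∧ z ≤ Ssum μ F X (n + 1) ω := Iff.rfl
      have hT : ω ∈ Tset μ F X z (n + 1)
          ↔ ω ∈ Tset μ F X z n ∧ Ssum μ F X (n + 1) ω < z := by
        rw [Tset_succ]; exact Set.mem_inter_iff _ _ _
      by_cases h1 : ω ∈ Tset μ F X z n
      · by_cases h2 : z ≤ Ssum μ F X (n + 1) ω
        · rw [Set.indicator_of_mem (hH.2 ⟨h1, h2⟩), Set.indicator_of_notMem
            (fun hmem => absurd ((hT.1 hmem).2) (not_lt.2 h2)), Set.indicator_of_mem h1,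
            add_zero]
        · rw [Set.indicator_of_notMem (fun hmem => h2 (hH.1 hmem).2),
            Set.indicator_of_mem (hT.2 ⟨h1, not_le.1 h2⟩), Set.indicator_of_mem h1, zero_add]
      · rw [Set.indicator_of_notMem (fun hmem => h1 (hH.1 hmem).1),
          Set.indicator_of_notMem (fun hmem => h1 ((hT.1 hmem).1)),
          Set.indicator_of_notMem h1, add_zero]
    rw [Finset.sum_Icc_succ_top (Nat.succ_le_succ (Nat.zero_le n))]
    have key : (∫ ω, (Hset μ F X z (n + 1)).indicator (Mart μ F X lam c (n + 1)) ω ∂μ)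
        + ∫ ω, (Tset μ F X z (n + 1)).indicator (Mart μ F X lam c (n + 1)) ω ∂μ
        = ∫ ω, (Tset μ F X z n).indicator (Mart μ F X lam c (n + 1)) ω ∂μ := by
      rw [← integral_add intH intT]
      exact integral_congr_ae (ae_of_all _ split)
    have hstep := step_ineq ha hd hlam hsymm habs (z := z) n
    linarith [ih]

end Aux

/-- The function `C(u) = 2[u·arcsinh(u) − √(1+u²) + 1]/u²` for `u > 0`. -/
noncomputable def Cfun (u : ℝ) : ℝ :=
  2 * (u * Real.arsinh u - Real.sqrt (1 + u ^ 2) + 1) / u ^ 2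

lemma exponent_eq {z r d : ℝ} (hz : 0 < z) (hr : 0 < r) (hd : 0 < d) :
    (Real.cosh (Real.arsinh (z * d / r)) - 1) / d ^ 2 * r - Real.arsinh (z * d / r) / d * z
      = -(z ^ 2 / (2 * r)) * Cfun (z * d / r) := by
  have hu : (0:ℝ) < z * d / r := by positivity
  rw [Real.cosh_arsinh, Cfun]
  field_simp
  ring

/-- Corollary (supermartingale case): Freedman-type inequality for conditionally symmetric
supermartingales with `η_k = X_k − E[X_k | F_{k−1}] ≤ d` a.s., in terms of the predictable
quadratic variation `Q_n = Σ_{k=1}^n E[η_k² | F_{k−1}]`. -/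
theorem conditionally_symmetric_supermartingale_freedman_bound
    {Ω : Type*} {m0 : MeasurableSpace Ω} {μ : Measure Ω} [IsProbabilityMeasure μ]
    {F : Filtration ℕ m0} {X : ℕ → Ω → ℝ}
    (hsuper : Supermartingale X F μ)
    (hsymm : ∀ k : ℕ, 1 ≤ k → ∀ g : ℝ → ℝ, Measurable g →
      μ[fun ω => g (X k ω - (μ[X k | F (k - 1)]) ω) | F (k - 1)]
        =ᵐ[μ] μ[fun ω => g (-(X k ω - (μ[X k | F (k - 1)]) ω)) | F (k - 1)])
    {d : ℝ} (hd : 0 < d)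
    (hbdd : ∀ k : ℕ, 1 ≤ k → ∀ᵐ ω ∂μ, X k ω - (μ[X k | F (k - 1)]) ω ≤ d)
    {z r : ℝ} (hz : 0 < z) (hr : 0 < r) :
    μ {ω | ∃ n : ℕ, 1 ≤ n ∧ (∃ k, 1 ≤ k ∧ k ≤ n ∧ z ≤ X k ω - X 0 ω) ∧
        (∑ k ∈ Finset.Icc 1 n,
          (μ[fun ω' => (X k ω' - (μ[X k | F (k - 1)]) ω') ^ 2 | F (k - 1)]) ω) ≤ r}
      ≤ ENNReal.ofReal (Real.exp (-(z ^ 2 / (2 * r)) * Cfun (z * d / r))) := by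
  classical
  have ha : StronglyAdapted F X := hsuper.stronglyAdapted
  set u : ℝ := z * d / r with hu_def
  have hu : 0 < u := by positivity
  set lam : ℝ := Real.arsinh u / d with hlam_def
  have hlam : 0 < lam := div_pos (Real.arsinh_pos_iff.2 hu) hd
  have hlamd : lam * d = Real.arsinh u := div_mul_cancel₀ _ hd.ne'
  set c : ℝ := (Real.cosh (lam * d) - 1) / d ^ 2 with hc_def
  have hc0 : 0 ≤ c := by
    have := Real.one_le_cosh (lam * d)
    have hd2 : (0:ℝ) < d ^ 2 := by positivity
    apply div_nonneg <;> linarith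
  have hsymm' : ∀ k : ℕ, 1 ≤ k → ∀ g : ℝ → ℝ, Measurable g →
      μ[fun ω => g (eta μ F X k ω) | F (k - 1)]
        =ᵐ[μ] μ[fun ω => g (-(eta μ F X k ω)) | F (k - 1)] := hsymm
  have hbdd' : ∀ k : ℕ, 1 ≤ k → ∀ᵐ ω ∂μ, eta μ F X k ω ≤ d := hbdd
  have habs : ∀ k : ℕ, 1 ≤ k → ∀ᵐ ω ∂μ, |eta μ F X k ω| ≤ d := fun k hk =>
    eta_abs_le ha hsymm' hbdd' k hk
  -- the stopped events
  set A : ℕ → Set Ω := fun j => Hset μ F X z (j + 1) ∩ {ω | Qsum μ F X (j + 1) ω ≤ r}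
    with hA_def
  have measA : ∀ j, MeasurableSet (A j) := by
    intro j
    exact (F.le (j + 1) _ (Hset_meas ha z (j + 1))).inter
      (((Qsum_sm (j + 1)).mono (F.le (j + 1))).measurable measurableSet_Iic)
  have hdisj : Pairwise (Function.onFun Disjoint A) := by
    have key : ∀ i j, i < j → Disjoint (A i) (A j) := by
      intro i j hij
      rw [Set.disjoint_left]
      rintro ω ⟨⟨_, hS⟩, _⟩ ⟨⟨hT, _⟩, _⟩
      have : Ssum μ F X (i + 1) ω < z := hT (i + 1) (by omega) (by omega)
      exact absurd hS (not_le.2 this)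
    intro i j hij
    rcases Nat.lt_or_ge i j with h | h
    · exact key i j h
    · exact (key j i (by omega)).symm
  -- drift control
  have hdrift : ∀ᵐ ω ∂μ, ∀ k, X k ω - X 0 ω ≤ Ssum μ F X k ω := by
    have h1 : ∀ j : ℕ, 1 ≤ j → ∀ᵐ ω ∂μ, X j ω - X (j - 1) ω ≤ eta μ F X j ω := by
      intro j hj
      filter_upwards [hsuper.condExp_ae_le (Nat.sub_le j 1)] with ω hω
      simp only [eta]
      linarith
    have hall : ∀ᵐ ω ∂μ, ∀ j, 1 ≤ j → X j ω - X (j - 1) ω ≤ eta μ F X j ω := by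
      rw [ae_all_iff]
      intro j
      by_cases hj : 1 ≤ j
      · filter_upwards [h1 j hj] with ω h _
        exact h
      · filter_upwards with ω h
        omega
    filter_upwards [hall] with ω hω k
    induction k with
    | zero => simp [Ssum]
    | succ n ihn =>
      have := hω (n + 1) (by omega)
      rw [Ssum_succ]
      have hn1 : (n + 1 : ℕ) - 1 = n := rfl
      rw [hn1] at this
      linarith
  have hqv_all : ∀ᵐ ω ∂μ, ∀ k, 0 ≤ qv μ F X k ω := ae_all_iff.2 fun k => qv_nonneg k
  -- a.e. inclusion of the event in the union
  have hincl : ∀ᵐ ω ∂μ, ω ∈ {ω | ∃ n : ℕ, 1 ≤ n ∧ (∃ k, 1 ≤ k ∧ k ≤ n ∧ z ≤ X k ω - X 0 ω) ∧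
      (∑ k ∈ Finset.Icc 1 n,
        (μ[fun ω' => (X k ω' - (μ[X k | F (k - 1)]) ω') ^ 2 | F (k - 1)]) ω) ≤ r} →
      ω ∈ ⋃ j, A j := by
    filter_upwards [hdrift, hqv_all] with ω h1 h2 hev
    obtain ⟨n, hn, ⟨k, hk1, hkn, hXk⟩, hQ⟩ := hev
    have hQ' : Qsum μ F X n ω ≤ r := hQ
    have hSk : z ≤ Ssum μ F X k ω := hXk.trans (h1 k)
    have hex : ∃ j, 1 ≤ j ∧ z ≤ Ssum μ F X j ω := ⟨k, hk1, hSk⟩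
    set j0 := Nat.find hex with hj0_def
    obtain ⟨hj01, hj0S⟩ := Nat.find_spec hex
    have hj0k : j0 ≤ k := Nat.find_min' hex ⟨hk1, hSk⟩
    have hT : ω ∈ Tset μ F X z (j0 - 1) := by
      intro i hi1 hii
      have : i < j0 := by omega
      have hni := Nat.find_min hex this
      push_neg at hni
      exact not_le.1 (fun hc => absurd (hni hi1) (not_lt.2 hc))
    have hQj0 : Qsum μ F X j0 ω ≤ r := by
      refine le_trans ?_ hQ'
      refine Finset.sum_le_sum_of_subset_of_nonneg ?_ ?_
      · exact Finset.Icc_subset_Icc le_rfl (by omega)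
      · intro i _ _
        exact h2 i
    refine Set.mem_iUnion.2 ⟨j0 - 1, ?_⟩
    have hj0eq : j0 - 1 + 1 = j0 := by omega
    rw [hA_def]
    refine ⟨⟨?_, ?_⟩, ?_⟩
    · rw [hj0eq]; exact hT
    · rw [Set.mem_setOf_eq, hj0eq]; exact hj0S
    · rw [Set.mem_setOf_eq, hj0eq]; exact hQj0
  -- per-index lower bound on the integrals
  have hlow : ∀ j : ℕ, Real.exp (lam * z - c * r) * (μ (A j)).toReal
      ≤ ∫ ω, (Hset μ F X z (j + 1)).indicator (Mart μ F X lam c (j + 1)) ω ∂μ := by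
    intro j
    have hintM : Integrable (Mart μ F X lam c (j + 1)) μ := Mart_int ha hlam hc0 habs (j + 1)
    have measH : MeasurableSet (Hset μ F X z (j + 1)) := F.le (j + 1) _ (Hset_meas ha z (j + 1))
    rw [integral_indicator measH]
    have step1 : Real.exp (lam * z - c * r) * (μ (A j)).toReal
        ≤ ∫ ω in A j, Mart μ F X lam c (j + 1) ω ∂μ := by
      rw [mul_comm, ← smul_eq_mul]
      refine setIntegral_ge_of_const_le (measA j) (measure_ne_top μ _) ?_
        hintM.integrableOn
      rintro ω ⟨⟨_, hS⟩, hQ⟩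
      rw [Set.mem_setOf_eq] at hQ hS
      simp only [Mart]
      apply Real.exp_le_exp.2
      have h1 : lam * z ≤ lam * Ssum μ F X (j + 1) ω := by nlinarith
      have h2 : c * Qsum μ F X (j + 1) ω ≤ c * r := by nlinarith
      linarith
    refine step1.trans ?_
    refine setIntegral_mono_set hintM.integrableOn ?_ ?_
    · exact ae_of_all _ fun ω => (Mart_pos lam c (j + 1) ω).le
    · exact HasSubset.Subset.eventuallyLE Set.inter_subset_left
  -- partial sums bounded
  have hsum_bound : ∀ N : ℕ, ∑ j ∈ Finset.range N, (μ (A j)).toReal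
      ≤ Real.exp (c * r - lam * z) := by
    intro N
    have hpb := partial_bound ha hd hlam hsymm' habs (z := z) N
    have hTnn : 0 ≤ ∫ ω, (Tset μ F X z N).indicator (Mart μ F X lam c N) ω ∂μ := by
      refine integral_nonneg fun ω => ?_
      exact Set.indicator_nonneg (fun ω _ => (Mart_pos lam c N ω).le) ω
    have hreindex : ∑ j ∈ Finset.Icc 1 N, (∫ ω, (Hset μ F X z j).indicator
          (Mart μ F X lam c j) ω ∂μ)
        = ∑ j ∈ Finset.range N, ∫ ω, (Hset μ F X z (j + 1)).indicator
          (Mart μ F X lam c (j + 1)) ω ∂μ := by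
      rw [← Finset.Ico_add_one_right_eq_Icc, Finset.sum_Ico_eq_sum_range]
      simp [add_comm]
    have hsum1 : ∑ j ∈ Finset.range N, ∫ ω, (Hset μ F X z (j + 1)).indicator
        (Mart μ F X lam c (j + 1)) ω ∂μ ≤ 1 := by
      rw [← hreindex]
      linarith
    have hsum2 : Real.exp (lam * z - c * r) * ∑ j ∈ Finset.range N, (μ (A j)).toReal
        ≤ 1 := by
      rw [Finset.mul_sum]
      exact le_trans (Finset.sum_le_sum fun j _ => hlow j) hsum1
    have hE : 0 < Real.exp (lam * z - c * r) := Real.exp_pos _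
    rw [show c * r - lam * z = -(lam * z - c * r) by ring, Real.exp_neg, ← one_div,
      le_div_iff₀ hE, mul_comm]
    exact hsum2
  -- assemble in ENNReal
  have hmain : μ (⋃ j, A j) ≤ ENNReal.ofReal (Real.exp (c * r - lam * z)) := by
    rw [measure_iUnion hdisj measA, ENNReal.tsum_eq_iSup_sum]
    refine iSup_le fun s => ?_
    obtain ⟨N, hN⟩ := s.exists_nat_subset_range
    refine le_trans (Finset.sum_le_sum_of_subset hN) ?_
    have : ∑ j ∈ Finset.range N, μ (A j)
        = ENNReal.ofReal (∑ j ∈ Finset.range N, (μ (A j)).toReal) := by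
      rw [ENNReal.ofReal_sum_of_nonneg fun j _ => ENNReal.toReal_nonneg]
      refine Finset.sum_congr rfl fun j _ => ?_
      rw [ENNReal.ofReal_toReal (measure_ne_top μ _)]
    rw [this]
    exact ENNReal.ofReal_le_ofReal (hsum_bound N)
  have hexp : c * r - lam * z = -(z ^ 2 / (2 * r)) * Cfun u := by
    rw [hc_def, hlamd, hlam_def]
    exact exponent_eq hz hr hd
  calc μ {ω | ∃ n : ℕ, 1 ≤ n ∧ (∃ k, 1 ≤ k ∧ k ≤ n ∧ z ≤ X k ω - X 0 ω) ∧
        (∑ k ∈ Finset.Icc 1 n,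
          (μ[fun ω' => (X k ω' - (μ[X k | F (k - 1)]) ω') ^ 2 | F (k - 1)]) ω) ≤ r}
      ≤ μ (⋃ j, A j) := measure_mono_ae hincl
    _ ≤ ENNReal.ofReal (Real.exp (c * r - lam * z)) := hmain
    _ = ENNReal.ofReal (Real.exp (-(z ^ 2 / (2 * r)) * Cfun u)) := by rw [hexp]
end

section
/- Let {X_k, F_k}_{k≥0} be a discrete-time real-valued conditionally symmetric martingale with jumps ξ_k = X_k − X_{k−1} satisfying, almost surely for every k ≥ 1, |ξ_k| ≤ d and E[ξ_k² | F_{k−1}] ≤ σ², for some d, σ > 0. Set γ = σ²/d². Then for every t ∈ ℝ and n ≥ 1, E[ exp( t Σ_{k=1}^n ξ_k ) ] ≤ ( 1 + γ(cosh(td) − 1) )^n. -/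
open MeasureTheory ProbabilityTheory Filter Set

set_option maxHeartbeats 1000000

lemma cosh_sub_one_le_aux {x y : ℝ} (hy : 0 < y) (hxy : |x| ≤ y) :
    Real.cosh x - 1 ≤ x ^ 2 / y ^ 2 * (Real.cosh y - 1) := by
  have hx2 : x ^ 2 ≤ y ^ 2 := by nlinarith [abs_nonneg x, sq_abs x, abs_nonneg x]
  have hx1 : HasSum (fun n => x ^ (2 * (n + 1)) / (Nat.factorial (2 * (n + 1)) : ℝ)) (Real.cosh x - 1) := by
    have := (hasSum_nat_add_iff' (f := fun n => x ^ (2 * n) / (Nat.factorial (2 * n) : ℝ)) 1).2 (Real.hasSum_cosh x)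
    simpa using this
  have hy1 : HasSum (fun n => x ^ 2 / y ^ 2 * (y ^ (2 * (n + 1)) / (Nat.factorial (2 * (n + 1)) : ℝ)))
      (x ^ 2 / y ^ 2 * (Real.cosh y - 1)) := by
    refine HasSum.mul_left _ ?_
    have := (hasSum_nat_add_iff' (f := fun n => y ^ (2 * n) / (Nat.factorial (2 * n) : ℝ)) 1).2 (Real.hasSum_cosh y)
    simpa using this
  refine hasSum_le (fun n => ?_) hx1 hy1
  have hnum : x ^ (2 * (n + 1)) ≤ x ^ 2 / y ^ 2 * y ^ (2 * (n + 1)) := by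
    have h1 : x ^ (2 * (n + 1)) = x ^ 2 * (x ^ 2) ^ n := by
      rw [pow_mul]; ring
    have h2 : x ^ 2 / y ^ 2 * y ^ (2 * (n + 1)) = x ^ 2 * (y ^ 2) ^ n := by
      rw [pow_mul]; field_simp; ring
    rw [h1, h2]
    exact mul_le_mul_of_nonneg_left (pow_le_pow_left₀ (sq_nonneg x) hx2 n) (sq_nonneg x)
  rw [mul_div_assoc' ]
  exact div_le_div_of_nonneg_right hnum (by positivity) |>.trans_eq rfl

lemma cosh_mul_bound {t x d : ℝ} (hd : 0 < d) (hx : |x| ≤ d) :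
    Real.cosh (t * x) ≤ 1 + x ^ 2 / d ^ 2 * (Real.cosh (t * d) - 1) := by
  rcases eq_or_ne t 0 with h | h
  · have h1 : (0:ℝ) ≤ x ^ 2 / d ^ 2 := by positivity
    simp [h]
  · have hy : 0 < |t| * d := by positivity
    have hxy : |t * x| ≤ |t| * d := by
      rw [abs_mul]; exact mul_le_mul_of_nonneg_left hx (abs_nonneg t)
    have hmain := cosh_sub_one_le_aux hy hxy
    have hcosh : Real.cosh (|t| * d) = Real.cosh (t * d) := by
      rw [← Real.cosh_abs (t * d), abs_mul, abs_of_pos hd]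
    have hsq : (t * x) ^ 2 / (|t| * d) ^ 2 = x ^ 2 / d ^ 2 := by
      rw [mul_pow, mul_pow, sq_abs]
      rw [mul_div_mul_left _ _ (pow_ne_zero 2 h)]
    rw [hcosh, hsq] at hmain
    linarith

lemma condexp_exp_jump_bound
    {Ω : Type*} {m0 : MeasurableSpace Ω} {μ : Measure Ω} [IsProbabilityMeasure μ]
    {m : MeasurableSpace Ω} (hm : m ≤ m0)
    {ξ : Ω → ℝ} (hξsm : StronglyMeasurable[m0] ξ)
    (hsy : ∀ g : ℝ → ℝ, Measurable g →
      μ[fun ω => g (ξ ω) | m] =ᵐ[μ] μ[fun ω => g (-ξ ω) | m])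
    {d σ t : ℝ} (hd : 0 < d)
    (hbd : ∀ᵐ ω ∂μ, |ξ ω| ≤ d)
    (hv : ∀ᵐ ω ∂μ, (μ[fun ω => (ξ ω) ^ 2 | m]) ω ≤ σ ^ 2) :
    μ[fun ω => Real.exp (t * ξ ω) | m]
      ≤ᵐ[μ] fun _ => 1 + σ ^ 2 / d ^ 2 * (Real.cosh (t * d) - 1) := by
  set C := Real.cosh (t * d) - 1 with hC
  have hC0 : 0 ≤ C := by simp [hC, Real.one_le_cosh]
  set f : Ω → ℝ := fun ω => Real.exp (t * ξ ω) with hf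
  set g : Ω → ℝ := fun ω => Real.exp (t * (-ξ ω)) with hg
  have hfm : StronglyMeasurable[m0] f :=
    Real.continuous_exp.comp_stronglyMeasurable (hξsm.const_mul t)
  have hgm : StronglyMeasurable[m0] g :=
    Real.continuous_exp.comp_stronglyMeasurable (hξsm.neg.const_mul t)
  have hfb : ∀ᵐ ω ∂μ, ‖f ω‖ ≤ Real.exp (|t| * d) := by
    filter_upwards [hbd] with ω hω
    rw [Real.norm_eq_abs, Real.abs_exp]
    refine Real.exp_le_exp.2 ?_
    calc t * ξ ω ≤ |t * ξ ω| := le_abs_self _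
      _ = |t| * |ξ ω| := abs_mul _ _
      _ ≤ |t| * d := mul_le_mul_of_nonneg_left hω (abs_nonneg t)
  have hgb : ∀ᵐ ω ∂μ, ‖g ω‖ ≤ Real.exp (|t| * d) := by
    filter_upwards [hbd] with ω hω
    rw [Real.norm_eq_abs, Real.abs_exp]
    refine Real.exp_le_exp.2 ?_
    calc t * -ξ ω ≤ |t * -ξ ω| := le_abs_self _
      _ = |t| * |ξ ω| := by rw [abs_mul, abs_neg]
      _ ≤ |t| * d := mul_le_mul_of_nonneg_left hω (abs_nonneg t)
  have hif : Integrable f μ :=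
    Integrable.mono' (integrable_const _) hfm.aestronglyMeasurable hfb
  have hig : Integrable g μ :=
    Integrable.mono' (integrable_const _) hgm.aestronglyMeasurable hgb
  have hsy' : μ[f | m] =ᵐ[μ] μ[g | m] :=
    hsy (fun x => Real.exp (t * x)) (Real.measurable_exp.comp (measurable_const_mul t))
  -- cosh function
  set ch : Ω → ℝ := fun ω => Real.cosh (t * ξ ω) with hch
  have hch_eq : ch = (2⁻¹ : ℝ) • (f + g) := by
    funext ω
    simp only [hch, hf, hg, Pi.smul_apply, Pi.add_apply, smul_eq_mul, Real.cosh_eq, mul_neg]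
    ring
  have hchm : StronglyMeasurable[m0] ch :=
    Real.continuous_cosh.comp_stronglyMeasurable (hξsm.const_mul t)
  have hchb : ∀ᵐ ω ∂μ, ‖ch ω‖ ≤ Real.cosh (|t| * d) := by
    filter_upwards [hbd] with ω hω
    simp only [hch]
    rw [Real.norm_eq_abs, abs_of_pos (Real.cosh_pos _)]
    have h1 : |t * ξ ω| ≤ |t| * d := by
      rw [abs_mul]; exact mul_le_mul_of_nonneg_left hω (abs_nonneg t)
    exact Real.cosh_le_cosh.2 (h1.trans (le_abs_self _))
  have hich : Integrable ch μ :=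
    Integrable.mono' (integrable_const _) hchm.aestronglyMeasurable hchb
  have c1 : μ[ch | m] =ᵐ[μ] μ[f | m] := by
    have hadd := condExp_add (μ := μ) (m := m) hif hig
    have hsmul := condExp_smul (μ := μ) (m := m) (𝕜 := ℝ) (2⁻¹ : ℝ) (f + g)
    rw [hch_eq]
    filter_upwards [hadd, hsmul, hsy'] with ω h1 h2 h3
    have h4 : (μ[f + g | m]) ω = (μ[f | m]) ω + (μ[g | m]) ω := by rw [h1]; simp
    simp only [Pi.smul_apply, smul_eq_mul] at h2 ⊢
    rw [h2, h4, ← h3]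
    ring

  -- upper bound function
  set u : Ω → ℝ := fun ω => 1 + C / d ^ 2 * (ξ ω) ^ 2 with hu
  have hium : StronglyMeasurable[m0] u := by
    exact ((hξsm.pow 2).const_mul _).const_add 1
  have hub : ∀ᵐ ω ∂μ, ‖u ω‖ ≤ 1 + C / d ^ 2 * d ^ 2 := by
    filter_upwards [hbd] with ω hω
    have h1 : (ξ ω) ^ 2 ≤ d ^ 2 := by nlinarith [abs_nonneg (ξ ω), sq_abs (ξ ω)]
    have h2 : (0:ℝ) ≤ C / d ^ 2 := by positivity
    simp only [hu]
    rw [Real.norm_eq_abs, abs_of_nonneg (by nlinarith [sq_nonneg (ξ ω)])]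
    nlinarith
  have hiu : Integrable u μ :=
    Integrable.mono' (integrable_const _) hium.aestronglyMeasurable hub
  have c2 : ch ≤ᵐ[μ] u := by
    filter_upwards [hbd] with ω hω
    have := cosh_mul_bound (x := ξ ω) hd hω (t := t)
    simp only [hch, hu]
    calc Real.cosh (t * ξ ω) ≤ 1 + (ξ ω) ^ 2 / d ^ 2 * C := this
      _ = 1 + C / d ^ 2 * (ξ ω) ^ 2 := by ring
  have c3 : μ[ch | m] ≤ᵐ[μ] μ[u | m] := condExp_mono hich hiu c2
  -- compute condexp of u
  have hiξ2 : Integrable (fun ω => (ξ ω) ^ 2) μ := by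
    refine Integrable.mono' (integrable_const (d ^ 2)) (hξsm.pow 2).aestronglyMeasurable ?_
    filter_upwards [hbd] with ω hω
    rw [Real.norm_eq_abs, abs_of_nonneg (sq_nonneg _)]
    nlinarith [abs_nonneg (ξ ω), sq_abs (ξ ω)]
  have c4 : μ[u | m] =ᵐ[μ] fun ω => 1 + C / d ^ 2 * (μ[fun ω => (ξ ω) ^ 2 | m]) ω := by
    have hu_eq : u = (fun _ => (1:ℝ)) + (C / d ^ 2) • (fun ω => (ξ ω) ^ 2) := by
      funext ω; simp [hu, smul_eq_mul]
    rw [hu_eq]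
    calc μ[(fun _ => (1:ℝ)) + (C / d ^ 2) • (fun ω => (ξ ω) ^ 2) | m]
        =ᵐ[μ] μ[fun _ => (1:ℝ) | m] + μ[(C / d ^ 2) • (fun ω => (ξ ω) ^ 2) | m] :=
          condExp_add (integrable_const _) (hiξ2.smul _) _
      _ =ᵐ[μ] μ[fun _ => (1:ℝ) | m] + (C / d ^ 2) • μ[fun ω => (ξ ω) ^ 2 | m] :=
          EventuallyEq.add EventuallyEq.rfl (condExp_smul _ _ _)
      _ =ᵐ[μ] fun ω => 1 + C / d ^ 2 * (μ[fun ω => (ξ ω) ^ 2 | m]) ω := by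
          rw [condExp_const hm (1:ℝ)]
          exact EventuallyEq.of_eq (by funext ω; simp [smul_eq_mul])
  have c5 : (fun ω => 1 + C / d ^ 2 * (μ[fun ω => (ξ ω) ^ 2 | m]) ω)
      ≤ᵐ[μ] fun _ => 1 + σ ^ 2 / d ^ 2 * C := by
    filter_upwards [hv] with ω hω
    have h2 : (0:ℝ) ≤ C / d ^ 2 := by positivity
    have := mul_le_mul_of_nonneg_left hω h2
    calc 1 + C / d ^ 2 * (μ[fun ω => (ξ ω) ^ 2 | m]) ω
        ≤ 1 + C / d ^ 2 * σ ^ 2 := by linarith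
      _ = 1 + σ ^ 2 / d ^ 2 * C := by ring
  calc μ[f | m] =ᵐ[μ] μ[ch | m] := c1.symm
    _ ≤ᵐ[μ] μ[u | m] := c3
    _ ≤ᵐ[μ] fun _ => 1 + σ ^ 2 / d ^ 2 * C := c4.trans_le c5

/-- Inequality (13): for a conditionally symmetric martingale with jumps bounded by `d` and
conditional variance at most `σ²`, setting `γ = σ²/d²`, for every `t ∈ ℝ`,
`E[exp(t Σ_{k=1}^n ξ_k)] ≤ (1 + γ(cosh(td) − 1))^n`. -/
theorem conditionally_symmetric_mgf_bound
    {Ω : Type*} {m0 : MeasurableSpace Ω} {μ : Measure Ω} [IsProbabilityMeasure μ]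
    {F : Filtration ℕ m0} {X : ℕ → Ω → ℝ}
    (hmart : Martingale X F μ)
    (hsymm : ∀ k : ℕ, 1 ≤ k → ∀ g : ℝ → ℝ, Measurable g →
      μ[fun ω => g (X k ω - X (k - 1) ω) | F (k - 1)]
        =ᵐ[μ] μ[fun ω => g (-(X k ω - X (k - 1) ω)) | F (k - 1)])
    {d σ : ℝ} (hd : 0 < d) (hσ : 0 < σ)
    (hbdd : ∀ k : ℕ, 1 ≤ k → ∀ᵐ ω ∂μ, |X k ω - X (k - 1) ω| ≤ d)
    (hvar : ∀ k : ℕ, 1 ≤ k → ∀ᵐ ω ∂μ,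
      (μ[fun ω => (X k ω - X (k - 1) ω) ^ 2 | F (k - 1)]) ω ≤ σ ^ 2)
    (t : ℝ) (n : ℕ) (hn : 1 ≤ n) :
    ∫ ω, Real.exp (t * ∑ k ∈ Finset.Icc 1 n, (X k ω - X (k - 1) ω)) ∂μ
      ≤ (1 + (σ ^ 2 / d ^ 2) * (Real.cosh (t * d) - 1)) ^ n := by
  have hXm : ∀ k, StronglyMeasurable[m0] (X k) := fun k => (hmart.stronglyAdapted k).mono (F.le k)
  set B := 1 + σ ^ 2 / d ^ 2 * (Real.cosh (t * d) - 1) with hB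
  have hB1 : (1:ℝ) ≤ B := by
    have h1 : (0:ℝ) ≤ σ ^ 2 / d ^ 2 := by positivity
    have h2 := Real.one_le_cosh (t * d)
    rw [hB]
    nlinarith
  have hB0 : (0:ℝ) ≤ B := le_trans zero_le_one hB1
  have habs : ∀ᵐ ω ∂μ, ∀ k : ℕ, 1 ≤ k → |X k ω - X (k - 1) ω| ≤ d := by
    rw [ae_all_iff]
    intro k
    by_cases hk : 1 ≤ k
    · filter_upwards [hbdd k hk] with ω h _; exact h
    · filter_upwards with ω h; exact absurd h hk
  have key : ∀ N : ℕ,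
      μ[fun ω => Real.exp (t * (X (N + 1) ω - X N ω)) | F N] ≤ᵐ[μ] fun _ => B := by
    intro N
    have hk : 1 ≤ N + 1 := Nat.succ_le_succ (Nat.zero_le N)
    exact condexp_exp_jump_bound (μ := μ) (m := F N) (F.le N)
      ((hXm (N + 1)).sub (hXm N))
      (fun g hg => hsymm (N + 1) hk g hg) hd (hbdd (N + 1) hk) (hvar (N + 1) hk)
  clear hn
  induction n with
  | zero => simp
  | succ N ih =>
    set S : Ω → ℝ := fun ω => ∑ k ∈ Finset.Icc 1 N, (X k ω - X (k - 1) ω) with hS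
    have hSm : StronglyMeasurable[F N] S := by
      apply Finset.stronglyMeasurable_fun_sum
      intro k hk
      have hk2 : k ≤ N := (Finset.mem_Icc.mp hk).2
      exact ((hmart.stronglyAdapted k).mono (F.mono hk2)).sub
        ((hmart.stronglyAdapted (k - 1)).mono (F.mono (le_trans (Nat.sub_le k 1) hk2)))
    set f : Ω → ℝ := fun ω => Real.exp (t * S ω) with hf
    set g : Ω → ℝ := fun ω => Real.exp (t * (X (N + 1) ω - X N ω)) with hg
    have hfmN : StronglyMeasurable[F N] f :=
      Real.continuous_exp.comp_stronglyMeasurable (hSm.const_mul t)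
    have hfm0 : StronglyMeasurable[m0] f := hfmN.mono (F.le N)
    have hgm : StronglyMeasurable[m0] g :=
      Real.continuous_exp.comp_stronglyMeasurable (((hXm (N + 1)).sub (hXm N)).const_mul t)
    have hfb : ∀ᵐ ω ∂μ, ‖f ω‖ ≤ Real.exp (|t| * (N * d)) := by
      filter_upwards [habs] with ω hω
      rw [Real.norm_eq_abs, Real.abs_exp]
      apply Real.exp_le_exp.2
      have hs : |S ω| ≤ N * d := by
        calc |S ω| ≤ ∑ k ∈ Finset.Icc 1 N, |X k ω - X (k - 1) ω| :=
              Finset.abs_sum_le_sum_abs _ _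
          _ ≤ ∑ _k ∈ Finset.Icc 1 N, d :=
              Finset.sum_le_sum (fun k hk => hω k (Finset.mem_Icc.mp hk).1)
          _ = N * d := by rw [Finset.sum_const, Nat.card_Icc]; simp [nsmul_eq_mul]
      calc t * S ω ≤ |t * S ω| := le_abs_self _
        _ = |t| * |S ω| := abs_mul _ _
        _ ≤ |t| * (N * d) := mul_le_mul_of_nonneg_left hs (abs_nonneg t)
    have hgb : ∀ᵐ ω ∂μ, ‖g ω‖ ≤ Real.exp (|t| * d) := by
      filter_upwards [habs] with ω hω
      rw [Real.norm_eq_abs, Real.abs_exp]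
      apply Real.exp_le_exp.2
      have h1 := hω (N + 1) (Nat.succ_le_succ (Nat.zero_le N))
      calc t * (X (N + 1) ω - X N ω) ≤ |t * (X (N + 1) ω - X N ω)| := le_abs_self _
        _ = |t| * |X (N + 1) ω - X N ω| := abs_mul _ _
        _ ≤ |t| * d := mul_le_mul_of_nonneg_left h1 (abs_nonneg t)
    have hif : Integrable f μ :=
      Integrable.mono' (integrable_const _) hfm0.aestronglyMeasurable hfb
    have hig : Integrable g μ :=
      Integrable.mono' (integrable_const _) hgm.aestronglyMeasurable hgb
    have hifg : Integrable (f * g) μ := hig.bdd_mul hfm0.aestronglyMeasurable hfb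
    have hsum_eq : (fun ω => Real.exp (t * ∑ k ∈ Finset.Icc 1 (N + 1), (X k ω - X (k - 1) ω)))
        = f * g := by
      funext ω
      have h1 : ∑ k ∈ Finset.Icc 1 (N + 1), (X k ω - X (k - 1) ω)
          = (∑ k ∈ Finset.Icc 1 N, (X k ω - X (k - 1) ω)) + (X (N + 1) ω - X (N + 1 - 1) ω) :=
        Finset.sum_Icc_succ_top (Nat.succ_le_succ (Nat.zero_le N)) _
      rw [Pi.mul_apply, hf, hg, h1, mul_add, Real.exp_add]
      simp only [hS, Nat.add_sub_cancel]
    have hkey := key N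
    rw [← hg] at hkey
    calc ∫ ω, Real.exp (t * ∑ k ∈ Finset.Icc 1 (N + 1), (X k ω - X (k - 1) ω)) ∂μ
        = ∫ ω, (f * g) ω ∂μ := by rw [hsum_eq]
      _ = ∫ ω, (μ[f * g | F N]) ω ∂μ := (integral_condExp (F.le N)).symm
      _ = ∫ ω, (f * μ[g | F N]) ω ∂μ := integral_congr_ae
            (condExp_stronglyMeasurable_mul_of_bound (F.le N) hfmN hig _ hfb)
      _ ≤ ∫ ω, f ω * B ∂μ := by
            refine integral_mono_ae
              (integrable_condExp.bdd_mul hfm0.aestronglyMeasurable hfb)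
              (hif.mul_const B) ?_
            filter_upwards [hkey] with ω h
            exact mul_le_mul_of_nonneg_left h (Real.exp_pos _).le
      _ = (∫ ω, f ω ∂μ) * B := integral_mul_const B f
      _ ≤ B ^ N * B := mul_le_mul_of_nonneg_right ih hB0
      _ = B ^ (N + 1) := (pow_succ B N).symm
end

section
/- Let {X_k, F_k}_{k≥0} be a discrete-time real-valued conditionally symmetric martingale with jumps ξ_k = X_k − X_{k−1}, and let m be a positive even integer. Assume almost surely, for every k ≥ 1, |ξ_k| ≤ d and E[ξ_k^l | F_{k−1}] ≤ μ_l for every even l ∈ {2, 4, …, m}, for some d > 0 and nonnegative μ_2, …, μ_m. Set γ_{2l} = μ_{2l}/d^{2l}. Then for every t ∈ ℝ and n ≥ 1, E[ exp( t Σ_{k=1}^n ξ_k ) ] ≤ ( 1 + Σ_{l=1}^{m/2−1} (td)^{2l} (γ_{2l} − γ_m)/(2l)! + γ_m (cosh(td) − 1) )^n. -/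
open MeasureTheory ProbabilityTheory Filter Set

lemma cosh_tail_bound (t x d : ℝ) (M : ℕ) (hd : 0 < d) (hxd : |x| ≤ d) :
    Real.cosh (t*x) ≤ ∑ l ∈ Finset.range M, (t*x)^(2*l)/(Nat.factorial (2*l))
      + (x^(2*M)/d^(2*M)) *
        (Real.cosh (t*d) - ∑ l ∈ Finset.range M, (t*d)^(2*l)/(Nat.factorial (2*l))) := by
  set f : ℕ → ℝ := fun l => (t*x)^(2*l)/(Nat.factorial (2*l)) with hfdef
  set g : ℕ → ℝ := fun l => (t*d)^(2*l)/(Nat.factorial (2*l)) with hgdef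
  have hf : HasSum f (Real.cosh (t*x)) := Real.hasSum_cosh _
  have hg : HasSum g (Real.cosh (t*d)) := Real.hasSum_cosh _
  set c : ℝ := x^(2*M)/d^(2*M) with hcdef
  have hc : 0 ≤ c := by
    apply div_nonneg _ (by positivity)
    rw [← Even.pow_abs ⟨M, by ring⟩]; positivity
  have hsum1 : ∑ i ∈ Finset.range M, f i + ∑' i, f (i + M) = Real.cosh (t*x) := by
    rw [Summable.sum_add_tsum_nat_add M hf.summable, hf.tsum_eq]
  have hsum2 : ∑ i ∈ Finset.range M, g i + ∑' i, g (i + M) = Real.cosh (t*d) := by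
    rw [Summable.sum_add_tsum_nat_add M hg.summable, hg.tsum_eq]
  have hterm : ∀ i : ℕ, f (i + M) ≤ c * g (i + M) := by
    intro i
    have hk : (t*x)^(2*(i+M)) ≤ c * (t*d)^(2*(i+M)) := by
      have hsplit : 2*(i+M) = 2*M + 2*i := by ring
      have hxk : x^(2*(i+M)) ≤ x^(2*M) * d^(2*i) := by
        have h1 : x^(2*(i+M)) ≤ |x|^(2*(i+M)) := le_of_eq (Even.pow_abs ⟨i+M, by ring⟩ x).symm
        have h2 : |x|^(2*(i+M)) = |x|^(2*M) * |x|^(2*i) := by rw [hsplit, pow_add]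
        have h3 : |x|^(2*M) * |x|^(2*i) ≤ |x|^(2*M) * d^(2*i) :=
          mul_le_mul_of_nonneg_left (pow_le_pow_left₀ (abs_nonneg x) hxd _) (by positivity)
        have h4 : |x|^(2*M) = x^(2*M) := Even.pow_abs ⟨M, by ring⟩ x
        calc x^(2*(i+M)) ≤ |x|^(2*M) * |x|^(2*i) := h1.trans_eq h2
          _ ≤ |x|^(2*M) * d^(2*i) := h3
          _ = x^(2*M) * d^(2*i) := by rw [h4]
      have ht : (0:ℝ) ≤ t^(2*(i+M)) := Even.pow_nonneg ⟨i+M, by ring⟩ t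
      calc (t*x)^(2*(i+M)) = t^(2*(i+M)) * x^(2*(i+M)) := mul_pow t x _
        _ ≤ t^(2*(i+M)) * (x^(2*M) * d^(2*i)) := mul_le_mul_of_nonneg_left hxk ht
        _ = c * (t*d)^(2*(i+M)) := by
            rw [hcdef, mul_pow t d]
            have : d^(2*(i+M)) = d^(2*M) * d^(2*i) := by rw [hsplit, pow_add]
            rw [this]
            field_simp
    have hfac : (0:ℝ) < (Nat.factorial (2*(i+M)) : ℝ) := by positivity
    simp only [hfdef, hgdef]
    rw [← mul_div_assoc]
    exact div_le_div_of_nonneg_right hk hfac.le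
  have htail : ∑' i, f (i + M) ≤ c * ∑' i, g (i + M) := by
    rw [← tsum_mul_left]
    exact Summable.tsum_le_tsum hterm ((summable_nat_add_iff M).2 hf.summable)
      (((summable_nat_add_iff M).2 hg.summable).mul_left c)
  nlinarith [htail, hsum1, hsum2]

/-- Inequality (21): for a conditionally symmetric martingale with jumps bounded by `d` and
conditional even moments `E[ξ_k^{2l} | F_{k−1}] ≤ μ_{2l}` for `l = 1, …, m/2`, setting
`γ_{2l} = μ_{2l}/d^{2l}`, for every `t ∈ ℝ`,
`E[exp(t Σ_{k=1}^n ξ_k)] ≤ (1 + Σ_{l=1}^{m/2−1} (td)^{2l}(γ_{2l} − γ_m)/(2l)! + γ_m(cosh(td) − 1))^n`. -/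
theorem conditionally_symmetric_mgf_moment_bound
    {Ω : Type*} {m0 : MeasurableSpace Ω} {μ : Measure Ω} [IsProbabilityMeasure μ]
    {F : Filtration ℕ m0} {X : ℕ → Ω → ℝ}
    (hmart : Martingale X F μ)
    (hsymm : ∀ k : ℕ, 1 ≤ k → ∀ g : ℝ → ℝ, Measurable g →
      μ[fun ω => g (X k ω - X (k - 1) ω) | F (k - 1)]
        =ᵐ[μ] μ[fun ω => g (-(X k ω - X (k - 1) ω)) | F (k - 1)])
    {m : ℕ} (hm_even : Even m) (hm_pos : 0 < m)
    {d : ℝ} (hd : 0 < d) {μmom : ℕ → ℝ}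
    (hμnonneg : ∀ l, 1 ≤ l → l ≤ m / 2 → 0 ≤ μmom (2 * l))
    (hbdd : ∀ k : ℕ, 1 ≤ k → ∀ᵐ ω ∂μ, |X k ω - X (k - 1) ω| ≤ d)
    (hmom : ∀ k : ℕ, 1 ≤ k → ∀ l, 1 ≤ l → l ≤ m / 2 → ∀ᵐ ω ∂μ,
      (μ[fun ω => (X k ω - X (k - 1) ω) ^ (2 * l) | F (k - 1)]) ω ≤ μmom (2 * l))
    (t : ℝ) (n : ℕ) (hn : 1 ≤ n) :
    ∫ ω, Real.exp (t * ∑ k ∈ Finset.Icc 1 n, (X k ω - X (k - 1) ω)) ∂μ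
      ≤ (1 + (∑ l ∈ Finset.Icc 1 (m / 2 - 1),
            (t * d) ^ (2 * l) * (μmom (2 * l) / d ^ (2 * l) - μmom m / d ^ m)
              / (Nat.factorial (2 * l)))
          + (μmom m / d ^ m) * (Real.cosh (t * d) - 1)) ^ n := by
  set M := m / 2 with hMdef
  have hm2 : m = 2 * M := (Nat.mul_div_cancel' hm_even.two_dvd).symm
  have hM1 : 1 ≤ M := by omega
  set B : ℝ := 1 + (∑ l ∈ Finset.Icc 1 (M - 1),
      (t * d) ^ (2 * l) * (μmom (2 * l) / d ^ (2 * l) - μmom m / d ^ m)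
        / (Nat.factorial (2 * l)))
    + (μmom m / d ^ m) * (Real.cosh (t * d) - 1) with hBdef
  -- basic measurability
  have hXsm : ∀ k, StronglyMeasurable (X k) := fun k => (hmart.stronglyAdapted k).mono (F.le k)
  have hξsm : ∀ k : ℕ, StronglyMeasurable (fun ω => X k ω - X (k-1) ω) :=
    fun k => (hXsm k).sub (hXsm (k-1))
  -- integrability of bounded measurable functions
  have hintb : ∀ (f : Ω → ℝ) (C : ℝ), AEStronglyMeasurable f μ →
      (∀ᵐ ω ∂μ, |f ω| ≤ C) → Integrable f μ := fun f C hm hb =>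
    (integrable_const C).mono' hm (by simpa [Real.norm_eq_abs] using hb)
  -- pointwise bounds and integrability of functions of the jumps
  have hint_pow : ∀ k, 1 ≤ k → ∀ j : ℕ,
      Integrable (fun ω => (X k ω - X (k-1) ω)^j) μ := by
    intro k hk j
    refine hintb _ (d^j) ((continuous_pow j).comp_stronglyMeasurable (hξsm k)).aestronglyMeasurable ?_
    filter_upwards [hbdd k hk] with ω hω
    rw [abs_pow]
    exact pow_le_pow_left₀ (abs_nonneg _) hω j
  have habs_td : ∀ k, 1 ≤ k → ∀ᵐ ω ∂μ, |t * (X k ω - X (k-1) ω)| ≤ |t| * d := by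
    intro k hk
    filter_upwards [hbdd k hk] with ω hω
    rw [abs_mul]
    exact mul_le_mul_of_nonneg_left hω (abs_nonneg t)
  have hint_exp : ∀ k, 1 ≤ k →
      Integrable (fun ω => Real.exp (t * (X k ω - X (k-1) ω))) μ := by
    intro k hk
    refine hintb _ (Real.exp (|t| * d))
      ((Real.continuous_exp.comp (continuous_const.mul continuous_id)).comp_stronglyMeasurable
        (hξsm k)).aestronglyMeasurable ?_
    filter_upwards [habs_td k hk] with ω hω
    rw [Real.abs_exp]
    exact Real.exp_le_exp.2 ((le_abs_self _).trans hω)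
  have hint_cosh : ∀ k, 1 ≤ k →
      Integrable (fun ω => Real.cosh (t * (X k ω - X (k-1) ω))) μ := by
    intro k hk
    refine hintb _ (Real.exp (|t| * d))
      ((Real.continuous_cosh.comp (continuous_const.mul continuous_id)).comp_stronglyMeasurable
        (hξsm k)).aestronglyMeasurable ?_
    filter_upwards [habs_td k hk] with ω hω
    have h2 := Real.exp_le_exp.2 ((le_abs_self (t * (X k ω - X (k-1) ω))).trans hω)
    have h3 := Real.exp_le_exp.2 ((neg_le_abs (t * (X k ω - X (k-1) ω))).trans hω)
    have h4 := Real.exp_pos (t * (X k ω - X (k-1) ω))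
    have h5 := Real.exp_pos (-(t * (X k ω - X (k-1) ω)))
    rw [abs_of_pos (Real.cosh_pos _), Real.cosh_eq]
    linarith
  have hint_sinh : ∀ k, 1 ≤ k →
      Integrable (fun ω => Real.sinh (t * (X k ω - X (k-1) ω))) μ := by
    intro k hk
    refine hintb _ (Real.exp (|t| * d))
      ((Real.continuous_sinh.comp (continuous_const.mul continuous_id)).comp_stronglyMeasurable
        (hξsm k)).aestronglyMeasurable ?_
    filter_upwards [habs_td k hk] with ω hω
    have h2 := Real.exp_le_exp.2 ((le_abs_self (t * (X k ω - X (k-1) ω))).trans hω)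
    have h3 := Real.exp_le_exp.2 ((neg_le_abs (t * (X k ω - X (k-1) ω))).trans hω)
    have h4 := Real.exp_pos (t * (X k ω - X (k-1) ω))
    have h5 := Real.exp_pos (-(t * (X k ω - X (k-1) ω)))
    rw [Real.sinh_eq]
    rw [abs_le]
    constructor <;> [nlinarith; nlinarith]
  -- the sinh part of the conditional expectation vanishes by symmetry
  have hsinh0 : ∀ k, 1 ≤ k →
      μ[fun ω => Real.sinh (t * (X k ω - X (k-1) ω))|F (k-1)] =ᵐ[μ] 0 := by
    intro k hk
    have hg : Measurable (fun x : ℝ => Real.sinh (t * x)) := by fun_prop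
    have h1 := hsymm k hk _ hg
    have h2 : (fun ω => Real.sinh (t * -(X k ω - X (k-1) ω)))
        = -(fun ω => Real.sinh (t * (X k ω - X (k-1) ω))) := by
      funext ω; simp only [Pi.neg_apply, mul_neg, Real.sinh_neg]
    rw [h2] at h1
    have h3 := h1.trans (condExp_neg (μ := μ) (m := F (k-1))
      (fun ω => Real.sinh (t * (X k ω - X (k-1) ω))))
    filter_upwards [h3] with ω hω
    have : (μ[fun ω => Real.sinh (t * (X k ω - X (k-1) ω))|F (k-1)]) ω
        = -((μ[fun ω => Real.sinh (t * (X k ω - X (k-1) ω))|F (k-1)]) ω) := hω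
    simp only [Pi.zero_apply]
    linarith
  have hexp_cosh : ∀ k, 1 ≤ k →
      μ[fun ω => Real.exp (t * (X k ω - X (k-1) ω))|F (k-1)]
        =ᵐ[μ] μ[fun ω => Real.cosh (t * (X k ω - X (k-1) ω))|F (k-1)] := by
    intro k hk
    have heq : (fun ω => Real.exp (t * (X k ω - X (k-1) ω)))
        = (fun ω => Real.cosh (t * (X k ω - X (k-1) ω)))
          + (fun ω => Real.sinh (t * (X k ω - X (k-1) ω))) := by
      funext ω; simp [Real.cosh_add_sinh]
    rw [heq]
    refine (condExp_add (hint_cosh k hk) (hint_sinh k hk) _).trans ?_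
    filter_upwards [hsinh0 k hk] with ω hω
    simp [hω]
  -- the remainder term
  set R : ℝ := Real.cosh (t*d) - ∑ l ∈ Finset.range M, (t*d)^(2*l)/(Nat.factorial (2*l))
    with hRdef
  have hrange : Finset.range M = insert 0 (Finset.Icc 1 (M-1)) := by
    ext l; simp only [Finset.mem_range, Finset.mem_insert, Finset.mem_Icc]; omega
  have hR0 : 0 ≤ R := by
    have h := sum_le_hasSum (Finset.range M)
      (fun l _ => div_nonneg (Even.pow_nonneg ⟨l, by ring⟩ _) (by positivity))
      (Real.hasSum_cosh (t*d))
    simp only [hRdef]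
    linarith
  have hsum_eq : ∀ y : ℝ, ∑ l ∈ Finset.range M, (t*y)^(2*l)/(Nat.factorial (2*l))
      = 1 + ∑ l ∈ Finset.Icc 1 (M-1), t^(2*l)/(Nat.factorial (2*l)) * y^(2*l) := by
    intro y
    rw [hrange, Finset.sum_insert (by simp)]
    simp only [Nat.mul_zero, pow_zero, Nat.factorial_zero, Nat.cast_one, div_one]
    congr 1
    refine Finset.sum_congr rfl fun l _ => ?_
    rw [mul_pow]; ring
  -- algebraic identity for B
  have hBeq : B = 1 + ∑ l ∈ Finset.Icc 1 (M-1), t^(2*l)/(Nat.factorial (2*l)) * μmom (2*l)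
      + (R/d^(2*M)) * μmom (2*M) := by
    have hterm : ∀ l ∈ Finset.Icc 1 (M-1),
        (t*d)^(2*l) * (μmom (2*l)/d^(2*l) - μmom m/d^m) / (Nat.factorial (2*l))
        = t^(2*l)/(Nat.factorial (2*l)) * μmom (2*l)
          - (μmom m/d^m) * ((t*d)^(2*l)/(Nat.factorial (2*l))) := by
      intro l _
      have hfac : ((Nat.factorial (2*l) : ℝ)) ≠ 0 := by positivity
      have hdl : d^(2*l) ≠ 0 := by positivity
      have hdm : d^m ≠ 0 := by positivity
      rw [mul_pow]
      field_simp
    have hgsum : ∑ l ∈ Finset.range M, (t*d)^(2*l)/(Nat.factorial (2*l))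
        = 1 + ∑ l ∈ Finset.Icc 1 (M-1), (t*d)^(2*l)/(Nat.factorial (2*l)) := by
      rw [hrange, Finset.sum_insert (by simp)]
      simp
    have hm' : d ^ m = d ^ (2*M) := by rw [← hm2]
    have hμm : μmom m = μmom (2*M) := by rw [← hm2]
    rw [hBdef, Finset.sum_congr rfl hterm, Finset.sum_sub_distrib, ← Finset.mul_sum,
      hRdef, hgsum, hm', hμm]
    have hdM : d^(2*M) ≠ 0 := by positivity
    field_simp
    ring
  -- the one-step conditional bound
  have hstep : ∀ k, 1 ≤ k →
      ∀ᵐ ω ∂μ, (μ[fun ω => Real.exp (t * (X k ω - X (k-1) ω))|F (k-1)]) ω ≤ B := by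
    intro k hk
    set p : ℕ → Ω → ℝ := fun l ω => (X k ω - X (k-1) ω)^(2*l) with hpdef
    set c : ℕ → ℝ := fun l => t^(2*l)/(Nat.factorial (2*l)) with hcdef
    set h : Ω → ℝ := ((fun _ => (1:ℝ))
      + ∑ l ∈ Finset.Icc 1 (M-1), c l • p l) + (R/d^(2*M)) • p M with hhdef
    have hint_p : ∀ l : ℕ, Integrable (p l) μ := fun l => hint_pow k hk (2*l)
    have hint_sum : ∀ l ∈ Finset.Icc 1 (M-1), Integrable (c l • p l) μ :=
      fun l _ => (hint_p l).smul (c l)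
    have hint_sumPi : Integrable (∑ l ∈ Finset.Icc 1 (M-1), c l • p l) μ := by
      refine (integrable_finset_sum (Finset.Icc 1 (M-1)) hint_sum).congr
        (Filter.Eventually.of_forall fun ω => ?_)
      simp
    have hint_cs : Integrable ((fun _ => (1:ℝ))
        + ∑ l ∈ Finset.Icc 1 (M-1), c l • p l) μ := (integrable_const 1).add hint_sumPi
    have hint_h : Integrable h μ := hint_cs.add ((hint_p M).smul _)
    -- pointwise domination of cosh
    have hpt : (fun ω => Real.cosh (t * (X k ω - X (k-1) ω))) ≤ᵐ[μ] h := by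
      filter_upwards [hbdd k hk] with ω hω
      have hcb := cosh_tail_bound t (X k ω - X (k-1) ω) d M hd hω
      rw [hsum_eq] at hcb
      have he : ((X k ω - X (k-1) ω)^(2*M)/d^(2*M)) * R
          = (R/d^(2*M)) * (X k ω - X (k-1) ω)^(2*M) := by ring
      simp only [hhdef, Pi.add_apply, Finset.sum_apply, Pi.smul_apply, smul_eq_mul,
        hpdef, hcdef]
      linarith
    -- conditional expectation of h
    have hsmul_all : ∀ᵐ ω ∂μ, ∀ l : ℕ,
        (μ[c l • p l|F (k-1)]) ω = c l * (μ[p l|F (k-1)]) ω :=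
      ae_all_iff.2 fun l => (condExp_smul (c l) (p l) _).mono fun ω hω => by simpa using hω
    have e1 := condExp_add (μ := μ) (m := F (k-1)) hint_cs ((hint_p M).smul (R/d^(2*M)))
    have e2 := condExp_add (μ := μ) (m := F (k-1)) (integrable_const (1:ℝ)) hint_sumPi
    have e3 := condExp_finsetSum (μ := μ) (m := F (k-1)) hint_sum
    have e4 := condExp_smul (μ := μ) (m := F (k-1)) (R/d^(2*M)) (p M)
    have hconst : μ[(fun _ => (1:ℝ))|F (k-1)] = fun _ => (1:ℝ) :=
      condExp_const (F.le (k-1)) 1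
    have hmom_all : ∀ᵐ ω ∂μ, ∀ l, 1 ≤ l → l ≤ M →
        (μ[p l|F (k-1)]) ω ≤ μmom (2*l) := by
      rw [ae_all_iff]
      intro l
      by_cases hl : 1 ≤ l ∧ l ≤ M
      · filter_upwards [hmom k hk l hl.1 hl.2] with ω hω _ _; exact hω
      · filter_upwards with ω h1 h2; exact absurd ⟨h1, h2⟩ hl
    filter_upwards [hexp_cosh k hk,
      condExp_mono (hint_cosh k hk) hint_h hpt,
      e1, e2, e3, e4, hsmul_all, hmom_all] with ω w1 w2 w3 w4 w5 w6 w7 w8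
    rw [w1]
    refine w2.trans ?_
    have hval : (μ[h|F (k-1)]) ω
        = 1 + ∑ l ∈ Finset.Icc 1 (M-1), c l * (μ[p l|F (k-1)]) ω
          + (R/d^(2*M)) * (μ[p M|F (k-1)]) ω := by
      rw [hhdef, w3]
      simp only [Pi.add_apply]
      rw [w4]
      simp only [Pi.add_apply, hconst]
      rw [w5]
      simp only [Finset.sum_apply]
      rw [Finset.sum_congr rfl fun l _ => w7 l]
      have : (μ[(R/d^(2*M)) • p M|F (k-1)]) ω = (R/d^(2*M)) * (μ[p M|F (k-1)]) ω := by
        rw [w6]; simp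
      rw [this]
    rw [hval, hBeq]
    have hsle : ∑ l ∈ Finset.Icc 1 (M-1), c l * (μ[p l|F (k-1)]) ω
        ≤ ∑ l ∈ Finset.Icc 1 (M-1), t^(2*l)/(Nat.factorial (2*l)) * μmom (2*l) := by
      refine Finset.sum_le_sum fun l hl => ?_
      obtain ⟨hl1, hl2⟩ := Finset.mem_Icc.1 hl
      have hc0 : 0 ≤ c l :=
        div_nonneg (Even.pow_nonneg ⟨l, by ring⟩ _) (by positivity)
      exact mul_le_mul_of_nonneg_left (w8 l hl1 (by omega)) hc0
    have hMle : (R/d^(2*M)) * (μ[p M|F (k-1)]) ω ≤ (R/d^(2*M)) * μmom (2*M) :=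
      mul_le_mul_of_nonneg_left (w8 M hM1 le_rfl) (div_nonneg hR0 (by positivity))
    linarith
  -- strong measurability of partial sums
  have hS_sm : ∀ j : ℕ, StronglyMeasurable[F j]
      (fun ω => Real.exp (t * ∑ k ∈ Finset.Icc 1 j, (X k ω - X (k-1) ω))) := by
    intro j
    apply Continuous.comp_stronglyMeasurable (g := fun y : ℝ => Real.exp (t*y)) (by fun_prop)
    apply Finset.stronglyMeasurable_fun_sum
    intro k hk
    have hk' : k ≤ j := (Finset.mem_Icc.1 hk).2
    exact ((hmart.stronglyAdapted k).mono (F.mono hk')).sub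
      ((hmart.stronglyAdapted (k-1)).mono (F.mono (le_trans (Nat.sub_le k 1) hk')))
  have hint_expS : ∀ j : ℕ,
      Integrable (fun ω => Real.exp (t * ∑ k ∈ Finset.Icc 1 j, (X k ω - X (k-1) ω))) μ := by
    intro j
    refine hintb _ (Real.exp (|t| * (j * d)))
      ((hS_sm j).mono (F.le j)).aestronglyMeasurable ?_
    have hball : ∀ᵐ ω ∂μ, ∀ k, 1 ≤ k → |X k ω - X (k-1) ω| ≤ d := by
      rw [ae_all_iff]
      intro k
      by_cases hk : 1 ≤ k
      · filter_upwards [hbdd k hk] with ω hω _; exact hω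
      · filter_upwards with ω h1; exact absurd h1 hk
    filter_upwards [hball] with ω hω
    rw [Real.abs_exp]
    apply Real.exp_le_exp.2
    have hsum : |∑ k ∈ Finset.Icc 1 j, (X k ω - X (k-1) ω)| ≤ j * d := by
      refine (Finset.abs_sum_le_sum_abs _ _).trans ?_
      have h1 : ∑ k ∈ Finset.Icc 1 j, |X k ω - X (k-1) ω| ≤ ∑ k ∈ Finset.Icc 1 j, d :=
        Finset.sum_le_sum fun k hk => hω k (Finset.mem_Icc.1 hk).1
      refine h1.trans ?_
      rw [Finset.sum_const, Nat.card_Icc]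
      simp only [nsmul_eq_mul]
      have : ((j + 1 - 1 : ℕ) : ℝ) = (j : ℝ) := by norm_num
      rw [this]
    calc t * ∑ k ∈ Finset.Icc 1 j, (X k ω - X (k-1) ω)
        ≤ |t * ∑ k ∈ Finset.Icc 1 j, (X k ω - X (k-1) ω)| := le_abs_self _
      _ = |t| * |∑ k ∈ Finset.Icc 1 j, (X k ω - X (k-1) ω)| := abs_mul _ _
      _ ≤ |t| * (j * d) := mul_le_mul_of_nonneg_left hsum (abs_nonneg t)
  -- B is at least 1
  have hB1 : (1:ℝ) ≤ B := by
    have hlow : μ[(fun _ => (1:ℝ))|F (1-1)] ≤ᵐ[μ]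
        μ[fun ω => Real.cosh (t * (X 1 ω - X (1-1) ω))|F (1-1)] :=
      condExp_mono (integrable_const 1) (hint_cosh 1 le_rfl)
        (Filter.Eventually.of_forall fun ω => Real.one_le_cosh _)
    have hconst1 : μ[(fun _ => (1:ℝ))|F (1-1)] = fun _ => (1:ℝ) :=
      condExp_const (F.le (1-1)) 1
    rw [hconst1] at hlow
    have hcomb : ∀ᵐ ω ∂μ, (1:ℝ) ≤ B := by
      filter_upwards [hlow, hstep 1 le_rfl, hexp_cosh 1 le_rfl] with ω w1 w2 w3
      rw [w3] at w2
      exact le_trans w1 w2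
    have : (ae μ).NeBot := ae_neBot.2 (IsProbabilityMeasure.ne_zero μ)
    obtain ⟨ω, hω⟩ := hcomb.exists
    exact hω
  -- main induction
  have main : ∀ j : ℕ,
      ∫ ω, Real.exp (t * ∑ k ∈ Finset.Icc 1 j, (X k ω - X (k-1) ω)) ∂μ ≤ B ^ j := by
    intro j
    induction j with
    | zero => simp
    | succ j ih =>
      have hprod : (fun ω => Real.exp (t * ∑ k ∈ Finset.Icc 1 (j+1), (X k ω - X (k-1) ω)))
          = (fun ω => Real.exp (t * ∑ k ∈ Finset.Icc 1 j, (X k ω - X (k-1) ω)))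
            * (fun ω => Real.exp (t * (X (j+1) ω - X ((j+1)-1) ω))) := by
        funext ω
        rw [Finset.sum_Icc_succ_top (by omega)]
        simp only [Pi.mul_apply]
        rw [mul_add, Real.exp_add]
      have hint_prod : Integrable
          ((fun ω => Real.exp (t * ∑ k ∈ Finset.Icc 1 j, (X k ω - X (k-1) ω)))
            * (fun ω => Real.exp (t * (X (j+1) ω - X ((j+1)-1) ω)))) μ :=
        hprod ▸ hint_expS (j+1)
      have hmul := condExp_mul_of_stronglyMeasurable_left (μ := μ) (m := F j)
        (hS_sm j) hint_prod (hint_exp (j+1) (by omega))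
      calc ∫ ω, Real.exp (t * ∑ k ∈ Finset.Icc 1 (j+1), (X k ω - X (k-1) ω)) ∂μ
          = ∫ ω, (μ[(fun ω => Real.exp (t * ∑ k ∈ Finset.Icc 1 j, (X k ω - X (k-1) ω)))
            * (fun ω => Real.exp (t * (X (j+1) ω - X ((j+1)-1) ω)))|F j]) ω ∂μ := by
            rw [integral_condExp (F.le j), ← hprod]
        _ = ∫ ω, Real.exp (t * ∑ k ∈ Finset.Icc 1 j, (X k ω - X (k-1) ω))
            * (μ[fun ω => Real.exp (t * (X (j+1) ω - X ((j+1)-1) ω))|F j]) ω ∂μ := by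
            refine integral_congr_ae (hmul.mono fun ω hω => ?_)
            simpa using hω
        _ ≤ ∫ ω, Real.exp (t * ∑ k ∈ Finset.Icc 1 j, (X k ω - X (k-1) ω)) * B ∂μ := by
            have hint1 : Integrable (fun ω =>
                Real.exp (t * ∑ k ∈ Finset.Icc 1 j, (X k ω - X (k-1) ω))
                  * (μ[fun ω => Real.exp (t * (X (j+1) ω - X ((j+1)-1) ω))|F j]) ω) μ :=
              integrable_condExp.congr (hmul.mono fun ω hω => by simpa using hω)
            refine integral_mono_ae hint1 ((hint_expS j).mul_const B) ?_
            filter_upwards [hstep (j+1) (by omega)] with ω hω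
            exact mul_le_mul_of_nonneg_left hω (Real.exp_pos _).le
        _ = (∫ ω, Real.exp (t * ∑ k ∈ Finset.Icc 1 j, (X k ω - X (k-1) ω)) ∂μ) * B :=
            integral_mul_const B _
        _ ≤ B ^ j * B :=
            mul_le_mul_of_nonneg_right ih (le_trans zero_le_one hB1)
        _ = B ^ (j+1) := (pow_succ B j).symm
  exact main n
end

section
/- Let {X_n, F_n}_{n≥0} be a discrete-time real-valued conditionally symmetric martingale with jumps ξ_k = X_k − X_{k−1} ≤ 1 almost surely, set S_n = X_n − X_0 and Q_n = Σ_{k=1}^n E[ξ_k² | F_{k−1}] (Q_0 = 0). For constants λ ≥ 0 and θ ≥ cosh(λ) − 1, define U_n = exp(λ S_n − θ Q_n). Then {U_n, F_n}_{n≥0} is a supermartingale. -/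
open MeasureTheory ProbabilityTheory Filter Set

lemma sinh_mul_le {t a : ℝ} (ht0 : 0 ≤ t) (ht1 : t ≤ 1) (ha : 0 ≤ a) :
    Real.sinh (t * a) ≤ t * Real.sinh a := by
  have hmono : MonotoneOn (fun a => t * Real.sinh a - Real.sinh (t * a)) (Set.Ici 0) := by
    apply monotoneOn_of_deriv_nonneg (convex_Ici 0)
    · exact (Continuous.continuousOn (by continuity))
    · intro x _
      exact ((Real.differentiable_sinh.const_mul t).sub
        ((Real.differentiable_sinh.comp ((differentiable_const t).mul differentiable_id)))).differentiableAt.differentiableWithinAt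
    · intro x hx
      rw [interior_Ici] at hx
      have hxpos : 0 < x := hx
      have h1 : HasDerivAt (fun a => t * Real.sinh a - Real.sinh (t * a))
          (t * Real.cosh x - Real.cosh (t * x) * t) x := by
        have := ((Real.hasDerivAt_sinh x).const_mul t).sub
          ((Real.hasDerivAt_sinh (t * x)).comp x ((hasDerivAt_id x).const_mul t))
        simp only [mul_one] at this; exact this
      rw [h1.deriv]
      have hc : Real.cosh (t * x) ≤ Real.cosh x := by
        rw [Real.cosh_le_cosh]
        rw [abs_of_nonneg (mul_nonneg ht0 hxpos.le), abs_of_pos hxpos]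
        nlinarith
      nlinarith
  have h := hmono (Set.self_mem_Ici) (Set.mem_Ici.2 ha) ha
  simp only [mul_zero, Real.sinh_zero, sub_zero] at h
  linarith

lemma cosh_mul_le_aux {a b : ℝ} (ha : 0 ≤ a) (hb : 0 ≤ b) (hb1 : b ≤ 1) :
    Real.cosh (a * b) ≤ 1 + (Real.cosh a - 1) * b ^ 2 := by
  have hid : ∀ y : ℝ, Real.cosh y = 1 + 2 * Real.sinh (y / 2) ^ 2 := by
    intro y
    have h1 := Real.cosh_two_mul (y / 2)
    have h2 := Real.cosh_sq (y / 2)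
    rw [show 2 * (y / 2) = y by ring] at h1
    rw [h1, h2]; ring
  rw [hid (a * b), hid a]
  have h := sinh_mul_le hb hb1 (by positivity : (0:ℝ) ≤ a / 2)
  have h0 : 0 ≤ Real.sinh (b * (a / 2)) := Real.sinh_nonneg_iff.2 (by positivity)
  have heq : a * b / 2 = b * (a / 2) := by ring
  rw [heq]
  nlinarith [Real.sinh_nonneg_iff.2 (by positivity : (0:ℝ) ≤ a / 2)]

lemma cosh_mul_le {l x : ℝ} (hx : |x| ≤ 1) :
    Real.cosh (l * x) ≤ 1 + (Real.cosh l - 1) * x ^ 2 := by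
  have h := cosh_mul_le_aux (abs_nonneg l) (abs_nonneg x) hx
  rw [← abs_mul, Real.cosh_abs, Real.cosh_abs, sq_abs] at h
  exact h

/-- Lemma 2: for a conditionally symmetric martingale with jumps `ξ_k ≤ 1` a.s., and
constants `λ ≥ 0`, `θ ≥ cosh(λ) − 1`, the process
`U_n = exp(λ S_n − θ Q_n)` (with `S_n = X_n − X_0` and `Q_n = Σ_{k=1}^n E[ξ_k² | F_{k−1}]`)
is a supermartingale. -/
theorem exp_minus_quadratic_variation_supermartingale
    {Ω : Type*} {m0 : MeasurableSpace Ω} {μ : Measure Ω} [IsProbabilityMeasure μ]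
    {F : Filtration ℕ m0} {X : ℕ → Ω → ℝ}
    (hmart : Martingale X F μ)
    (hsymm : ∀ k : ℕ, 1 ≤ k → ∀ g : ℝ → ℝ, Measurable g →
      μ[fun ω => g (X k ω - X (k - 1) ω) | F (k - 1)]
        =ᵐ[μ] μ[fun ω => g (-(X k ω - X (k - 1) ω)) | F (k - 1)])
    (hbdd : ∀ k : ℕ, 1 ≤ k → ∀ᵐ ω ∂μ, X k ω - X (k - 1) ω ≤ 1)
    {l θ : ℝ} (hl : 0 ≤ l) (hθ : Real.cosh l - 1 ≤ θ) :
    Supermartingale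
      (fun n ω => Real.exp (l * (X n ω - X 0 ω)
        - θ * ∑ k ∈ Finset.Icc 1 n,
            (μ[fun ω' => (X k ω' - X (k - 1) ω') ^ 2 | F (k - 1)]) ω))
      F μ := by
  have hF : ∀ n, F n ≤ m0 := fun n => F.le n
  have hθ0 : 0 ≤ θ := le_trans (by linarith [Real.one_le_cosh l]) hθ
  set q : ℕ → Ω → ℝ := fun k => μ[fun ω' => (X k ω' - X (k - 1) ω') ^ 2 | F (k - 1)] with hqdef
  set U : ℕ → Ω → ℝ := fun n ω => Real.exp (l * (X n ω - X 0 ω)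
    - θ * ∑ k ∈ Finset.Icc 1 n, q k ω) with hUdef
  -- jump integrability and measurability
  have hξint : ∀ k : ℕ, Integrable (fun ω => X k ω - X (k - 1) ω) μ :=
    fun k => (hmart.integrable k).sub (hmart.integrable (k - 1))
  have hξsm : ∀ k : ℕ, StronglyMeasurable (fun ω => X k ω - X (k - 1) ω) :=
    fun k => ((hmart.stronglyAdapted k).mono (hF k)).sub ((hmart.stronglyAdapted (k - 1)).mono (hF (k - 1)))
  -- |ξ_k| ≤ 1 a.e.
  have habs : ∀ k : ℕ, 1 ≤ k → ∀ᵐ ω ∂μ, |X k ω - X (k - 1) ω| ≤ 1 := by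
    intro k hk
    have hg : Measurable (fun x : ℝ => max (x - 1) 0) :=
      (measurable_id.sub measurable_const).max measurable_const
    have hsym := hsymm k hk _ hg
    have h1 : (fun ω => max (X k ω - X (k - 1) ω - 1) 0) =ᵐ[μ] 0 := by
      filter_upwards [hbdd k hk] with ω h
      simpa using max_eq_right (sub_nonpos.2 h)
    have hint : Integrable (fun ω => max (-(X k ω - X (k - 1) ω) - 1) 0) μ :=
      ((hξint k).neg.sub (integrable_const 1)).pos_part
    have h2 : μ[fun ω => max (-(X k ω - X (k - 1) ω) - 1) 0 | F (k - 1)] =ᵐ[μ] 0 := by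
      refine hsym.symm.trans ?_
      refine (condExp_congr_ae h1).trans ?_
      simp [condExp_zero]
    have hzero : ∫ ω, max (-(X k ω - X (k - 1) ω) - 1) 0 ∂μ = 0 := by
      rw [← integral_condExp (hF (k - 1)) (μ := μ)
        (f := fun ω => max (-(X k ω - X (k - 1) ω) - 1) 0)]
      rw [integral_congr_ae h2]
      simp
    have h3 := (integral_eq_zero_iff_of_nonneg_ae
      (ae_of_all _ fun ω => le_max_right _ _) hint).1 hzero
    filter_upwards [h3, hbdd k hk] with ω h0 hle
    have h4 : max (-(X k ω - X (k - 1) ω) - 1) 0 = 0 := h0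
    have h5 := le_max_left (-(X k ω - X (k - 1) ω) - 1) 0
    rw [h4] at h5
    rw [abs_le]; constructor <;> linarith
  -- basic facts about q
  have hqsm : ∀ k : ℕ, StronglyMeasurable[F (k - 1)] (q k) := fun k => stronglyMeasurable_condExp
  have hq_nonneg : ∀ k : ℕ, 0 ≤ᵐ[μ] q k :=
    fun k => condExp_nonneg (ae_of_all _ fun ω => sq_nonneg _)
  -- adaptedness
  have hUadp : StronglyAdapted F U := by
    intro n
    refine Real.continuous_exp.comp_stronglyMeasurable ?_
    refine StronglyMeasurable.sub ?_ ?_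
    · exact (((hmart.stronglyAdapted n).sub ((hmart.stronglyAdapted 0).mono (F.mono (Nat.zero_le n)))).const_mul l)
    · refine StronglyMeasurable.const_mul ?_ θ
      refine Finset.stronglyMeasurable_fun_sum _ (fun k hk => ?_)
      have hkn : k - 1 ≤ n := by
        have := (Finset.mem_Icc.1 hk).2; omega
      exact (hqsm k).mono (F.mono hkn)
  -- uniform a.e. bound on U n
  have hbdd' : ∀ᵐ ω ∂μ, ∀ k : ℕ, 1 ≤ k → X k ω - X (k - 1) ω ≤ 1 := by
    rw [ae_all_iff]
    intro k
    rcases Nat.eq_zero_or_pos k with h | h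
    · exact ae_of_all _ fun ω h1 => absurd h1 (by omega)
    · filter_upwards [hbdd k h] with ω hω _ using hω
  have hq_nonneg' : ∀ᵐ ω ∂μ, ∀ k : ℕ, 0 ≤ q k ω := ae_all_iff.2 hq_nonneg
  have hU_bdd : ∀ n : ℕ, ∀ᵐ ω ∂μ, ‖U n ω‖ ≤ Real.exp (l * n) := by
    intro n
    filter_upwards [hbdd', hq_nonneg'] with ω hb hq
    have hS : X n ω - X 0 ω ≤ n := by
      have htel : ∑ i ∈ Finset.range n, (X (i + 1) ω - X i ω) = X n ω - X 0 ω :=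
        Finset.sum_range_sub (fun i => X i ω) n
      rw [← htel]
      calc ∑ i ∈ Finset.range n, (X (i + 1) ω - X i ω)
          ≤ ∑ _i ∈ Finset.range n, (1 : ℝ) := by
            refine Finset.sum_le_sum fun i _ => ?_
            simpa using hb (i + 1) (by omega)
        _ = n := by simp
    have hQ : 0 ≤ ∑ k ∈ Finset.Icc 1 n, q k ω :=
      Finset.sum_nonneg fun k _ => hq k
    rw [Real.norm_eq_abs, abs_of_pos (Real.exp_pos _), Real.exp_le_exp]
    nlinarith
  have hUint : ∀ n : ℕ, Integrable (U n) μ := fun n =>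
    ⟨((hUadp n).mono (hF n)).aestronglyMeasurable,
      HasFiniteIntegral.of_bounded (hU_bdd n)⟩
  -- the one-step inequality
  have hstep : ∀ n : ℕ, μ[U (n + 1) | F n] ≤ᵐ[μ] U n := by
    intro n
    have habs1 : ∀ᵐ ω ∂μ, |X (n + 1) ω - X n ω| ≤ 1 := habs (n + 1) (by omega)
    -- integrability of exp(±lξ)
    have hexp_int : Integrable (fun ω => Real.exp (l * (X (n + 1) ω - X n ω))) μ := by
      refine Integrable.mono' (integrable_const (Real.exp l))
        (Real.continuous_exp.comp_stronglyMeasurable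
          ((hξsm (n + 1)).const_mul l)).aestronglyMeasurable ?_
      filter_upwards [habs1] with ω h
      rw [Real.norm_eq_abs, abs_of_pos (Real.exp_pos _), Real.exp_le_exp]
      have := abs_le.1 h
      nlinarith
    have hexp_neg_int : Integrable (fun ω => Real.exp (l * (-(X (n + 1) ω - X n ω)))) μ := by
      refine Integrable.mono' (integrable_const (Real.exp l))
        (Real.continuous_exp.comp_stronglyMeasurable
          (((hξsm (n + 1)).neg).const_mul l)).aestronglyMeasurable ?_
      filter_upwards [habs1] with ω h
      rw [Real.norm_eq_abs, abs_of_pos (Real.exp_pos _), Real.exp_le_exp]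
      have := abs_le.1 h
      nlinarith
    have hsq_int : Integrable (fun ω => (X (n + 1) ω - X n ω) ^ 2) μ := by
      refine Integrable.mono' (integrable_const 1)
        ((hξsm (n + 1)).pow 2).aestronglyMeasurable ?_
      filter_upwards [habs1] with ω h
      rw [Real.norm_eq_abs, abs_of_nonneg (sq_nonneg _), ← sq_abs]
      nlinarith [abs_nonneg (X (n + 1) ω - X n ω)]
    have hcosh_int : Integrable (fun ω => Real.cosh (l * (X (n + 1) ω - X n ω))) μ := by
      refine Integrable.mono' (integrable_const (Real.cosh l))
        (Real.continuous_cosh.comp_stronglyMeasurable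
          ((hξsm (n + 1)).const_mul l)).aestronglyMeasurable ?_
      filter_upwards [habs1] with ω h
      rw [Real.norm_eq_abs, abs_of_pos (Real.cosh_pos _), Real.cosh_le_cosh, abs_mul]
      calc |l| * |X (n + 1) ω - X n ω| ≤ |l| * 1 := by
            exact mul_le_mul_of_nonneg_left h (abs_nonneg l)
        _ = |l| := mul_one _
    -- symmetry
    have hsym := hsymm (n + 1) (by omega) (fun x => Real.exp (l * x))
      (Real.measurable_exp.comp (measurable_const.mul measurable_id))
    simp only [Nat.add_sub_cancel] at hsym
    -- condexp exp(lξ) = condexp cosh(lξ)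
    have hcosh_eq : μ[fun ω => Real.exp (l * (X (n + 1) ω - X n ω)) | F n]
        =ᵐ[μ] μ[fun ω => Real.cosh (l * (X (n + 1) ω - X n ω)) | F n] := by
      have hfun : (fun ω => Real.cosh (l * (X (n + 1) ω - X n ω)))
          = (2:ℝ)⁻¹ • ((fun ω => Real.exp (l * (X (n + 1) ω - X n ω)))
            + fun ω => Real.exp (l * (-(X (n + 1) ω - X n ω)))) := by
        funext ω
        simp only [Pi.smul_apply, Pi.add_apply, smul_eq_mul, Real.cosh_eq, mul_neg]
        ring
      have h1 := condExp_smul (μ := μ) (m := F n) ((2:ℝ)⁻¹)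
        ((fun ω => Real.exp (l * (X (n + 1) ω - X n ω)))
          + fun ω => Real.exp (l * (-(X (n + 1) ω - X n ω))))
      have h2 := condExp_add (μ := μ) (m := F n) hexp_int hexp_neg_int
      rw [hfun]
      filter_upwards [h1, h2, hsym] with ω e1 e2 e3
      rw [e1, Pi.smul_apply, e2, Pi.add_apply, smul_eq_mul]
      linarith [e3]
    -- condexp cosh(lξ) ≤ 1 + (cosh l - 1) q
    have hrhs_int : Integrable (fun ω => 1 + (Real.cosh l - 1) * (X (n + 1) ω - X n ω) ^ 2) μ :=
      (integrable_const 1).add (hsq_int.const_mul _)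
    have hmono : μ[fun ω => Real.cosh (l * (X (n + 1) ω - X n ω)) | F n]
        ≤ᵐ[μ] μ[fun ω => 1 + (Real.cosh l - 1) * (X (n + 1) ω - X n ω) ^ 2 | F n] := by
      refine condExp_mono hcosh_int hrhs_int ?_
      filter_upwards [habs1] with ω h
      exact cosh_mul_le h
    have hrhs_eq : μ[fun ω => 1 + (Real.cosh l - 1) * (X (n + 1) ω - X n ω) ^ 2 | F n]
        =ᵐ[μ] fun ω => 1 + (Real.cosh l - 1) * q (n + 1) ω := by
      have hfun : (fun ω => 1 + (Real.cosh l - 1) * (X (n + 1) ω - X n ω) ^ 2)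
          = (fun _ => (1:ℝ)) + (Real.cosh l - 1) • (fun ω => (X (n + 1) ω - X n ω) ^ 2) := rfl
      rw [hfun]
      have h1 := condExp_add (μ := μ) (m := F n) (integrable_const (1:ℝ))
        (by simpa [Pi.smul_def, smul_eq_mul] using hsq_int.const_mul (Real.cosh l - 1) :
          Integrable ((Real.cosh l - 1) • fun ω => (X (n + 1) ω - X n ω) ^ 2) μ)
      have h2 := condExp_smul (μ := μ) (m := F n) (Real.cosh l - 1)
        (fun ω => (X (n + 1) ω - X n ω) ^ 2)
      have h3 : μ[(fun _ => (1:ℝ)) | F n] = fun _ => (1:ℝ) := condExp_const (hF n) (1:ℝ)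
      have hq1 : q (n + 1) = μ[fun ω => (X (n + 1) ω - X n ω) ^ 2 | F n] := by
        rw [hqdef]
        simp only [Nat.add_sub_cancel]
      filter_upwards [h1, h2] with ω e1 e2
      rw [e1, Pi.add_apply, h3, e2, Pi.smul_apply, smul_eq_mul, hq1]
    -- key: condexp exp(lξ) ≤ exp(θ q)
    have hkey : μ[fun ω => Real.exp (l * (X (n + 1) ω - X n ω)) | F n]
        ≤ᵐ[μ] fun ω => Real.exp (θ * q (n + 1) ω) := by
      filter_upwards [hcosh_eq, hmono, hrhs_eq, hq_nonneg (n + 1)] with ω e1 e2 e3 e4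
      rw [e1]
      refine le_trans e2 ?_
      rw [e3]
      have h5 : (Real.cosh l - 1) * q (n + 1) ω ≤ θ * q (n + 1) ω :=
        mul_le_mul_of_nonneg_right hθ e4
      have h6 := Real.add_one_le_exp (θ * q (n + 1) ω)
      linarith
    -- pull-out
    set f : Ω → ℝ := fun ω => Real.exp (l * (X n ω - X 0 ω)
      - θ * (∑ k ∈ Finset.Icc 1 n, q k ω + q (n + 1) ω)) with hfdef
    have hfU : U (n + 1) = f * fun ω => Real.exp (l * (X (n + 1) ω - X n ω)) := by
      funext ω
      simp only [Pi.mul_apply, hUdef, hfdef, ← Real.exp_add]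
      congr 1
      rw [Finset.sum_Icc_succ_top (by omega : 1 ≤ n + 1)]
      ring
    have hf_meas : StronglyMeasurable[F n] f := by
      refine Real.continuous_exp.comp_stronglyMeasurable ?_
      refine StronglyMeasurable.sub ?_ ?_
      · exact ((hmart.stronglyAdapted n).sub ((hmart.stronglyAdapted 0).mono (F.mono (Nat.zero_le n)))).const_mul l
      · refine StronglyMeasurable.const_mul ?_ θ
        refine StronglyMeasurable.add ?_ ?_
        · refine Finset.stronglyMeasurable_fun_sum _ (fun k hk => ?_)
          have hkn : k - 1 ≤ n := by
            have := (Finset.mem_Icc.1 hk).2; omega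
          exact (hqsm k).mono (F.mono hkn)
        · have : (n + 1) - 1 = n := by omega
          exact (hqsm (n + 1)).mono (le_of_eq (by rw [this]))
    have hfg_int : Integrable (f * fun ω => Real.exp (l * (X (n + 1) ω - X n ω))) μ := by
      rw [← hfU]; exact hUint (n + 1)
    have hpull := condExp_mul_of_stronglyMeasurable_left hf_meas hfg_int hexp_int
    rw [hfU]
    filter_upwards [hpull, hkey] with ω hp hk
    rw [hp]
    simp only [Pi.mul_apply]
    have hf_nonneg : 0 ≤ f ω := (Real.exp_pos _).le
    calc f ω * (μ[fun ω => Real.exp (l * (X (n + 1) ω - X n ω)) | F n]) ω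
        ≤ f ω * Real.exp (θ * q (n + 1) ω) := mul_le_mul_of_nonneg_left hk hf_nonneg
      _ = U n ω := by
          simp only [hfdef, hUdef, ← Real.exp_add]
          congr 1
          ring
  exact supermartingale_nat hUadp hUint hstep
end

section
/- For every fixed γ ∈ (0,1], lim_{δ→1⁻} E(γ,δ) = ln(2/γ), where the limit is taken as δ increases to 1 from below. -/
open Filter Set

noncomputable def ufun (γ δ : ℝ) : ℝ :=
  δ * (1 - γ) + Real.sqrt (δ ^ 2 * (1 - γ) ^ 2 + γ ^ 2 * (1 - δ ^ 2))

noncomputable def tfun (γ δ : ℝ) : ℝ := ufun γ δ / (γ * (1 - δ))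

lemma u_pos {γ δ : ℝ} (hγ0 : 0 < γ) (hγ1 : γ ≤ 1) (hδ : δ ∈ Set.Ioo (0:ℝ) 1) :
    0 < ufun γ δ := by
  obtain ⟨hδ0, hδ1⟩ := hδ
  have h1 : 0 < γ ^ 2 * (1 - δ ^ 2) := by nlinarith [mul_pos (show (0:ℝ) < 1 - δ by linarith) (show (0:ℝ) < 1 + δ by linarith), sq_nonneg γ, mul_pos hγ0 hγ0]
  have h2 : 0 < δ ^ 2 * (1 - γ) ^ 2 + γ ^ 2 * (1 - δ ^ 2) := by nlinarith
  have := Real.sqrt_pos.mpr h2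
  have h3 : 0 ≤ δ * (1 - γ) := by nlinarith
  unfold ufun; linarith

lemma u_le_three {γ δ : ℝ} (hγ0 : 0 < γ) (hγ1 : γ ≤ 1) (hδ : δ ∈ Set.Ioo (0:ℝ) 1) :
    ufun γ δ ≤ 3 := by
  obtain ⟨hδ0, hδ1⟩ := hδ
  have h1 : δ ^ 2 * (1 - γ) ^ 2 + γ ^ 2 * (1 - δ ^ 2) ≤ 4 := by nlinarith
  have h2 : Real.sqrt (δ ^ 2 * (1 - γ) ^ 2 + γ ^ 2 * (1 - δ ^ 2)) ≤ 2 := by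
    calc Real.sqrt (δ ^ 2 * (1 - γ) ^ 2 + γ ^ 2 * (1 - δ ^ 2)) ≤ Real.sqrt 4 :=
          Real.sqrt_le_sqrt h1
      _ = 2 := by
          rw [show (4:ℝ) = 2 ^ 2 by norm_num, Real.sqrt_sq (by norm_num)]
  have h3 : δ * (1 - γ) ≤ 1 := by nlinarith
  unfold ufun; linarith

lemma u_ge {γ δ : ℝ} (hγ0 : 0 < γ) (hγ1 : γ ≤ 1) (hδ : δ ∈ Set.Ioo (0:ℝ) 1) :
    γ * Real.sqrt (1 - δ) ≤ ufun γ δ := by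
  obtain ⟨hδ0, hδ1⟩ := hδ
  have h1 : γ ^ 2 * (1 - δ) ≤ δ ^ 2 * (1 - γ) ^ 2 + γ ^ 2 * (1 - δ ^ 2) := by
    nlinarith [sq_nonneg (δ * (1 - γ)), mul_pos (mul_pos hγ0 hγ0) (mul_pos hδ0 (show (0:ℝ) < 1 - δ by linarith))]
  have h2 : Real.sqrt (γ ^ 2 * (1 - δ)) ≤
      Real.sqrt (δ ^ 2 * (1 - γ) ^ 2 + γ ^ 2 * (1 - δ ^ 2)) := Real.sqrt_le_sqrt h1
  have h3 : Real.sqrt (γ ^ 2 * (1 - δ)) = γ * Real.sqrt (1 - δ) := by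
    rw [Real.sqrt_mul (by positivity), Real.sqrt_sq hγ0.le]
  have h4 : 0 ≤ δ * (1 - γ) := by nlinarith
  unfold ufun; linarith [h2, h3 ▸ h2]

lemma t_ge {γ δ : ℝ} (hγ0 : 0 < γ) (hγ1 : γ ≤ 1) (hδ : δ ∈ Set.Ioo (0:ℝ) 1) :
    (Real.sqrt (1 - δ))⁻¹ ≤ tfun γ δ := by
  obtain ⟨hδ0, hδ1⟩ := hδ
  have hδ1' : 0 < 1 - δ := by linarith
  have hden : 0 < γ * (1 - δ) := by positivity
  have hs : 0 < Real.sqrt (1 - δ) := Real.sqrt_pos.mpr hδ1'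
  rw [tfun, le_div_iff₀ hden]
  have hss : Real.sqrt (1 - δ) ^ 2 = 1 - δ := Real.sq_sqrt hδ1'.le
  have : (Real.sqrt (1 - δ))⁻¹ * (γ * (1 - δ)) = γ * Real.sqrt (1 - δ) := by
    field_simp; nlinarith [hss]
  rw [this]
  exact u_ge hγ0 hγ1 ⟨hδ0, hδ1⟩

lemma t_pos {γ δ : ℝ} (hγ0 : 0 < γ) (hγ1 : γ ≤ 1) (hδ : δ ∈ Set.Ioo (0:ℝ) 1) :
    0 < tfun γ δ := by
  have := u_pos hγ0 hγ1 hδ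
  have : 0 < γ * (1 - δ) := by have := hδ.2; nlinarith [hγ0]
  exact div_pos (u_pos hγ0 hγ1 hδ) this

lemma Eexp_eq {γ δ : ℝ} (hγ0 : 0 < γ) (hγ1 : γ ≤ 1) (hδ : δ ∈ Set.Ioo (0:ℝ) 1) :
    Eexp γ δ = (δ - 1) * Real.log (tfun γ δ)
      - Real.log ((1 - γ) / tfun γ δ + γ / 2 + γ / (2 * tfun γ δ ^ 2)) := by
  have ht := t_pos hγ0 hγ1 hδ
  have hB : 0 < (1 - γ) / tfun γ δ + γ / 2 + γ / (2 * tfun γ δ ^ 2) := by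
    have h1 : 0 ≤ (1 - γ) / tfun γ δ := div_nonneg (by linarith) ht.le
    have h2 : 0 < γ / 2 := by positivity
    have h3 : 0 < γ / (2 * tfun γ δ ^ 2) := by positivity
    linarith
  have hA : 1 + γ * (Real.cosh (Real.log (tfun γ δ)) - 1)
      = tfun γ δ * ((1 - γ) / tfun γ δ + γ / 2 + γ / (2 * tfun γ δ ^ 2)) := by
    rw [Real.cosh_log ht]
    field_simp
    ring
  have hE : Eexp γ δ = δ * Real.log (tfun γ δ)
      - Real.log (1 + γ * (Real.cosh (Real.log (tfun γ δ)) - 1)) := rfl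
  rw [hE, hA, Real.log_mul (ne_of_gt ht) (ne_of_gt hB)]
  ring

/-- For every fixed `γ ∈ (0,1]`, `E(γ,δ) → ln(2/γ)` as `δ → 1⁻`. -/
theorem Eexp_tendsto_log_two_div (γ : ℝ) (hγ : γ ∈ Set.Ioc (0 : ℝ) 1) :
    Tendsto (fun δ => Eexp γ δ) (nhdsWithin 1 (Set.Iio 1)) (nhds (Real.log (2 / γ))) := by
  obtain ⟨hγ0, hγ1⟩ := hγ
  set l := nhdsWithin (1:ℝ) (Set.Iio 1) with hl
  have hmem : ∀ᶠ δ in l, δ ∈ Set.Ioo (0:ℝ) 1 := by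
    have h1 : ∀ᶠ δ in l, δ ∈ Set.Iio (1:ℝ) := eventually_mem_nhdsWithin
    have h0 : ∀ᶠ δ in l, (0:ℝ) < δ :=
      eventually_nhdsWithin_of_eventually_nhds (eventually_gt_nhds (by norm_num))
    filter_upwards [h1, h0] with δ h1 h0
    exact ⟨h0, h1⟩
  -- (1 - δ) → 0⁺
  have hsub : Tendsto (fun δ : ℝ => 1 - δ) l (nhdsWithin 0 (Set.Ioi 0)) := by
    rw [tendsto_nhdsWithin_iff]
    constructor
    · have h : Tendsto (fun δ : ℝ => 1 - δ) (nhds 1) (nhds 0) := by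
        have := (tendsto_const_nhds (x := (1:ℝ))).sub (tendsto_id (x := nhds (1:ℝ)))
        simpa using this
      exact h.mono_left nhdsWithin_le_nhds
    · filter_upwards [hmem] with δ hδ
      simp only [Set.mem_Ioi]
      linarith [hδ.2]
  have hsqrt : Tendsto (fun δ : ℝ => Real.sqrt (1 - δ)) l (nhdsWithin 0 (Set.Ioi 0)) := by
    rw [tendsto_nhdsWithin_iff]
    constructor
    · have h2 : Tendsto Real.sqrt (nhdsWithin 0 (Set.Ioi 0)) (nhds 0) := by
        have := Real.continuous_sqrt.tendsto 0
        simpa using this.mono_left nhdsWithin_le_nhds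
      exact h2.comp hsub
    · filter_upwards [hmem] with δ hδ
      simp only [Set.mem_Ioi]
      exact Real.sqrt_pos.mpr (by linarith [hδ.2])
  have htinf : Tendsto (fun δ => tfun γ δ) l atTop := by
    apply tendsto_atTop_mono' l ?_ (tendsto_inv_nhdsGT_zero.comp hsqrt)
    filter_upwards [hmem] with δ hδ
    exact t_ge hγ0 hγ1 hδ
  -- limit of the second log term
  have hB : Tendsto (fun δ => (1 - γ) / tfun γ δ + γ / 2 + γ / (2 * tfun γ δ ^ 2)) l
      (nhds (γ / 2)) := by
    have h1 : Tendsto (fun δ => (1 - γ) / tfun γ δ) l (nhds 0) := by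
      have := htinf.inv_tendsto_atTop.const_mul (1 - γ)
      simpa [div_eq_mul_inv] using this
    have hsq : Tendsto (fun δ => 2 * tfun γ δ ^ 2) l atTop := by
      have h := (htinf.atTop_mul_atTop₀ htinf).const_mul_atTop (show (0:ℝ) < 2 by norm_num)
      refine h.congr (fun δ => ?_)
      ring
    have h2 : Tendsto (fun δ => γ / (2 * tfun γ δ ^ 2)) l (nhds 0) := by
      have := hsq.inv_tendsto_atTop.const_mul γ
      simpa [div_eq_mul_inv] using this
    have h3 := (h1.add (tendsto_const_nhds (x := γ / 2))).add h2
    simpa using h3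
  have hlogB : Tendsto
      (fun δ => Real.log ((1 - γ) / tfun γ δ + γ / 2 + γ / (2 * tfun γ δ ^ 2))) l
      (nhds (Real.log (γ / 2))) :=
    (Real.continuousAt_log (by positivity)).tendsto.comp hB
  -- limit of (δ-1) * log t
  have hδ1 : Tendsto (fun δ : ℝ => δ - 1) l (nhds 0) := by
    have h : Tendsto (fun δ : ℝ => δ - 1) (nhds 1) (nhds 0) := by
      have := (tendsto_id (x := nhds (1:ℝ))).sub (tendsto_const_nhds (x := (1:ℝ)))
      simpa using this
    exact h.mono_left nhdsWithin_le_nhds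
  have hxlogx : Tendsto (fun δ : ℝ => (1 - δ) * Real.log (1 - δ)) l (nhds 0) := by
    have h0 : Tendsto (fun x : ℝ => Real.log x * x) (nhdsWithin 0 (Set.Ioi 0)) (nhds 0) := by
      have h := tendsto_log_mul_rpow_nhdsGT_zero (show (0:ℝ) < 1 by norm_num)
      apply h.congr'
      filter_upwards [self_mem_nhdsWithin] with x hx
      rw [Real.rpow_one]
    have := h0.comp hsub
    simpa [mul_comm, Function.comp_def] using this
  have hlow : Tendsto (fun δ : ℝ => (δ - 1) * Real.log 3) l (nhds 0) := by
    simpa using hδ1.mul_const (Real.log 3)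
  have hhigh : Tendsto
      (fun δ : ℝ => (δ - 1) * (Real.log γ + Real.log (Real.sqrt (1 - δ)))) l (nhds 0) := by
    have h1 := hδ1.mul_const (Real.log γ)
    have h2 := hxlogx.const_mul (-(1/2) : ℝ)
    have h3 := h1.add h2
    apply Tendsto.congr' ?_ (by simpa using h3)
    filter_upwards [hmem] with δ hδ
    rw [Real.log_sqrt (by linarith [hδ.2])]
    ring
  have hlogu : Tendsto (fun δ => (δ - 1) * Real.log (ufun γ δ)) l (nhds 0) := by
    apply tendsto_of_tendsto_of_tendsto_of_le_of_le' hlow hhigh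
    · filter_upwards [hmem] with δ hδ
      have hu3 := u_le_three hγ0 hγ1 hδ
      have hup := u_pos hγ0 hγ1 hδ
      have : Real.log (ufun γ δ) ≤ Real.log 3 := Real.log_le_log hup hu3
      exact mul_le_mul_of_nonpos_left this (by linarith [hδ.2])
    · filter_upwards [hmem] with δ hδ
      have huge := u_ge hγ0 hγ1 hδ
      have hs : (0:ℝ) < Real.sqrt (1 - δ) := Real.sqrt_pos.mpr (by linarith [hδ.2])
      have hpos : 0 < γ * Real.sqrt (1 - δ) := by positivity
      have h : Real.log (γ * Real.sqrt (1 - δ)) ≤ Real.log (ufun γ δ) :=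
        Real.log_le_log hpos huge
      rw [Real.log_mul (ne_of_gt hγ0) (ne_of_gt hs)] at h
      exact mul_le_mul_of_nonpos_left h (by linarith [hδ.2])
  have hmul : Tendsto (fun δ => (δ - 1) * Real.log (tfun γ δ)) l (nhds 0) := by
    have h1 := hδ1.mul_const (Real.log γ)
    have h2 := (hlogu.sub h1).add hxlogx
    apply Tendsto.congr' ?_ (by simpa using h2)
    filter_upwards [hmem] with δ hδ
    have hup := u_pos hγ0 hγ1 hδ
    have hδ2 := hδ.2
    have hden : (0:ℝ) < γ * (1 - δ) := by
      have : (0:ℝ) < 1 - δ := by linarith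
      positivity
    have : Real.log (tfun γ δ) = Real.log (ufun γ δ) - (Real.log γ + Real.log (1 - δ)) := by
      rw [tfun, Real.log_div (ne_of_gt hup) (ne_of_gt hden),
        Real.log_mul (ne_of_gt hγ0) (by linarith : (1:ℝ) - δ ≠ 0)]
    rw [this]
    ring
  -- combine
  have hfinal := hmul.sub hlogB
  have heq : (0:ℝ) - Real.log (γ / 2) = Real.log (2 / γ) := by
    rw [Real.log_div (ne_of_gt hγ0) (by norm_num), Real.log_div (by norm_num) (ne_of_gt hγ0)]
    ring
  rw [heq] at hfinal
  apply Tendsto.congr' ?_ hfinal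
  filter_upwards [hmem] with δ hδ
  exact (Eexp_eq hγ0 hγ1 hδ).symm
end
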